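/- arXiv:1211.7339 — 4 statements merged into one kernel-verified Lean document; each statement's English description precedes it below -/
import Mathlib

section
/- Let (W,S) be a Coxeter system and let 𝒮^f be the set of subsets X of S such that the standard parabolic subgroup W_X is finite. Define a relation ⪯ on W × 𝒮^f by (u,X) ⪯ (v,Y) if and only if X ⊆ Y, v⁻¹u ∈ W_Y, and v⁻¹u has minimal length in the coset (v⁻¹u)W_X. Then ⪯ is a partial order relation on W × 𝒮^f. -/
/-- The standard parabolic subgroup `W_X` of a Coxeter system, generated by the
simple reflections indexed by `X`. -/
def CoxeterSystem.parabolic {B W : Type*} [Group W] {M : CoxeterMatrix B}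
    (cs : CoxeterSystem M W) (X : Set B) : Subgroup W :=
  Subgroup.closure (cs.simple '' X)

/-- `w` is `(∅,X)`-minimal: it has minimal length in the coset `w W_X`. -/
def CoxeterSystem.IsMinimalCosetRep {B W : Type*} [Group W] {M : CoxeterMatrix B}
    (cs : CoxeterSystem M W) (X : Set B) (w : W) : Prop :=
  ∀ u ∈ cs.parabolic X, cs.length w ≤ cs.length (w * u)

namespace CoxAux

open List CoxeterSystem

/-! ### Generic dihedral identities in a group -/

section Generic

variable {G : Type*} [Group G] {x y : G} (hx : x⁻¹ = x) (hy : y⁻¹ = y)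

include hx hy in
theorem semiconj_xy : SemiconjBy y (x * y) ((x * y)⁻¹) := by
  have : (x * y)⁻¹ = y * x := by rw [mul_inv_rev, hx, hy]
  rw [SemiconjBy, this, mul_assoc]

include hx hy in
theorem y_mul_zpow (n : ℤ) : y * (x * y) ^ n = (x * y) ^ (-n) * y := by
  have h := ((semiconj_xy hx hy).zpow_right n : SemiconjBy y ((x*y) ^ n) (((x*y)⁻¹) ^ n))
  rw [SemiconjBy] at h
  rw [h, inv_zpow, ← zpow_neg]

include hx hy in
theorem x_mul_zpow (n : ℤ) : x * (x * y) ^ n = (x * y) ^ (-n) * x := by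
  have hsc : SemiconjBy x (x * y) ((x * y)⁻¹) := by
    have hxx : x * x = 1 := by nth_rewrite 1 [← hx]; exact inv_mul_cancel x
    have h1 : x * (x * y) = y := by rw [← mul_assoc, hxx, one_mul]
    have h2 : (x * y)⁻¹ * x = y := by
      rw [mul_inv_rev, hx, hy, mul_assoc, hxx, mul_one]
    rw [SemiconjBy, h1, h2]
  have h := (hsc.zpow_right n : SemiconjBy x ((x*y) ^ n) (((x*y)⁻¹) ^ n))
  rw [SemiconjBy] at h
  rw [h, inv_zpow, ← zpow_neg]

include hx hy in
theorem dihedral_entry_zero (m : ℤ) :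
    (y * (x * y) ^ m)⁻¹ * x * (y * (x * y) ^ m) = (x * y) ^ (-(2 * m) - 1) * y := by
  calc (y * (x * y) ^ m)⁻¹ * x * (y * (x * y) ^ m)
      = (x * y) ^ (-m) * (y * (x * (y * (x * y) ^ m))) := by
        rw [mul_inv_rev, ← zpow_neg, hy]; simp only [mul_assoc]
    _ = (x * y) ^ (-m) * (y * (x * ((x * y) ^ (-m) * y))) := by rw [y_mul_zpow hx hy m]
    _ = (x * y) ^ (-m) * (y * ((x * y) ^ m * (x * y))) := by
        rw [← mul_assoc x, x_mul_zpow hx hy (-m), neg_neg]; simp only [mul_assoc]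
    _ = (x * y) ^ (-m) * (y * (x * y) ^ (m + 1)) := by rw [← zpow_add_one]
    _ = (x * y) ^ (-m) * ((x * y) ^ (-(m + 1)) * y) := by rw [y_mul_zpow hx hy (m + 1)]
    _ = (x * y) ^ (-m + -(m + 1)) * y := by rw [← mul_assoc, ← zpow_add]
    _ = (x * y) ^ (-(2 * m) - 1) * y := by congr 1; ring

include hx hy in
theorem dihedral_entry_one (m : ℤ) :
    ((x * y) ^ m)⁻¹ * y * (x * y) ^ m = (x * y) ^ (-(2 * m)) * y := by
  calc ((x * y) ^ m)⁻¹ * y * (x * y) ^ m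
      = (x * y) ^ (-m) * (y * (x * y) ^ m) := by rw [← zpow_neg, mul_assoc]
    _ = (x * y) ^ (-m) * ((x * y) ^ (-m) * y) := by rw [y_mul_zpow hx hy m]
    _ = (x * y) ^ (-m + -m) * y := by rw [← mul_assoc, ← zpow_add]
    _ = (x * y) ^ (-(2 * m)) * y := by congr 1; ring

end Generic

variable {B W : Type*} [Group W] {M : CoxeterMatrix B} (cs : CoxeterSystem M W)

local prefix:100 "s" => cs.simple
local prefix:100 "π" => cs.wordProd
local prefix:100 "ℓ" => cs.length

open scoped Classical

/-- The sign-flipping involution attached to a simple reflection. -/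
noncomputable def eta (i : B) : Equiv.Perm (W × ℤˣ) :=
  Function.Involutive.toPerm
    (fun p => (s i * p.1 * s i, if p.1 = s i then -p.2 else p.2))
    (by
      intro ⟨t, e⟩
      have h1 : s i * (s i * t * s i) * s i = t := by
        rw [← mul_assoc, ← mul_assoc, cs.simple_mul_simple_self, one_mul, mul_assoc,
          cs.simple_mul_simple_self, mul_one]
      have h2 : (s i * t * s i = s i) ↔ (t = s i) := by
        constructor
        · intro h
          have h' := congrArg (fun z => s i * z * s i) h
          rw [h1] at h'
          rw [h', cs.simple_mul_simple_self, one_mul]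
        · intro h
          rw [h, cs.simple_mul_simple_self, one_mul]
      simp only [h1, h2]
      by_cases h : t = s i <;> simp [h])

theorem eta_apply (i : B) (t : W) (e : ℤˣ) :
    eta cs i (t, e) = (s i * t * s i, if t = s i then -e else e) := rfl

/-- The sign of `t` relative to a word: `(-1)` to the number of occurrences of `t`
in the right inversion sequence. -/
noncomputable def sgn (l : List B) (t : W) : ℤˣ :=
  ((cs.rightInvSeq l).map (fun u => if u = t then (-1 : ℤˣ) else 1)).prod

theorem rightInvSeq_cons' (i : B) (l : List B) :
    cs.rightInvSeq (i :: l) = ((π l)⁻¹ * s i * π l) :: cs.rightInvSeq l := rfl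

theorem sgn_cons (i : B) (l : List B) (t : W) :
    sgn cs (i :: l) t = (if (π l)⁻¹ * s i * π l = t then (-1 : ℤˣ) else 1) * sgn cs l t := by
  rw [sgn, rightInvSeq_cons', map_cons, prod_cons]; rfl

/-- Formula for the product of the `eta` involutions along a word. -/
theorem prod_eta_map (l : List B) (t : W) (e : ℤˣ) :
    ((l.map (eta cs)).prod) (t, e) = (π l * t * (π l)⁻¹, sgn cs l t * e) := by
  induction l with
  | nil => simp [sgn]
  | cons i l ih =>
    rw [map_cons, prod_cons, Equiv.Perm.mul_apply, ih, eta_apply, cs.wordProd_cons, sgn_cons]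
    have hcond : (π l * t * (π l)⁻¹ = s i) ↔ ((π l)⁻¹ * s i * π l = t) := by
      constructor
      · intro h; rw [← h]; group
      · intro h; rw [← h]; group
    have hfst : s i * (π l * t * (π l)⁻¹) * s i = (s i * π l) * t * (s i * π l)⁻¹ := by
      rw [mul_inv_rev, cs.inv_simple]; group
    by_cases h : (π l)⁻¹ * s i * π l = t
    · rw [if_pos (hcond.mpr h), if_pos h, hfst]
      refine Prod.ext rfl ?_
      show -(sgn cs l t * e) = -1 * sgn cs l t * e
      rw [neg_one_mul, neg_mul]
    · rw [if_neg (fun hc => h (hcond.mp hc)), if_neg h, hfst]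
      refine Prod.ext rfl ?_
      show sgn cs l t * e = 1 * sgn cs l t * e
      rw [one_mul]

/-! ### The dihedral (alternating) word -/

variable (a b : B)

/-- The alternating word `[a, b, a, b, ...]` of length `2 * m`. -/
def altl : ℕ → List B
  | 0 => []
  | m + 1 => a :: b :: altl m

theorem wordProd_altl (m : ℕ) : π (altl a b m) = (s a * s b) ^ m := by
  induction m with
  | zero => simp [altl]
  | succ m ih =>
    rw [altl, cs.wordProd_cons, cs.wordProd_cons, ih, pow_succ']
    group

theorem rightInvSeq_altl (m : ℕ) :
    cs.rightInvSeq (altl a b m) =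
      (List.range (2 * m)).map
        (fun k : ℕ => (s a * s b) ^ ((k : ℤ) + 1 - 2 * m) * s b) := by
  have hx : (s a)⁻¹ = s a := cs.inv_simple a
  have hy : (s b)⁻¹ = s b := cs.inv_simple b
  induction m with
  | zero => simp [altl]
  | succ m ih =>
    rw [altl, rightInvSeq_cons', rightInvSeq_cons', ih, cs.wordProd_cons, wordProd_altl]
    have hrange : List.range (2 * (m + 1)) = 0 :: 1 :: List.map (fun k => k + 2)
        (List.range (2 * m)) := by
      rw [show 2 * (m + 1) = (2 * m + 1) + 1 by ring, List.range_succ_eq_map,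
        List.range_succ_eq_map, List.map_cons, List.map_map]
      refine congrArg _ (congrArg _ ?_)
      apply List.map_congr_left
      intro k _
      simp [Function.comp, Nat.succ_eq_add_one]
    rw [hrange, List.map_cons, List.map_cons, List.map_map]
    have he0 := dihedral_entry_zero hx hy (m : ℤ)
    rw [zpow_natCast] at he0
    have he1 := dihedral_entry_one hx hy (m : ℤ)
    rw [zpow_natCast] at he1
    refine congrArg₂ _ ?_ (congrArg₂ _ ?_ ?_)
    · rw [he0]
      congr 1
      congr 1
      push_cast
      ring
    · rw [he1]
      congr 1
      congr 1
      push_cast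
      ring
    · apply List.map_congr_left
      intro k _
      simp only [Function.comp]
      congr 1
      congr 1
      push_cast
      ring

theorem sgn_altl (t : W) : sgn cs (altl a b (M a b)) t = 1 := by
  set m := M a b with hm
  have hq : (s a * s b) ^ m = 1 := cs.simple_mul_simple_pow a b
  have hqz : (s a * s b) ^ (m : ℤ) = 1 := by rw [zpow_natCast, hq]
  rw [sgn, rightInvSeq_altl, List.map_map, (two_mul m : 2 * m = m + m), List.range_add,
    List.map_append, List.prod_append, List.map_map]
  have heq : List.map
      (((fun u => if u = t then (-1 : ℤˣ) else 1) ∘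
        (fun k : ℕ => (s a * s b) ^ ((k : ℤ) + 1 - 2 * m) * s b)) ∘ (m + ·))
      (List.range m) =
      List.map
      ((fun u => if u = t then (-1 : ℤˣ) else 1) ∘
        (fun k : ℕ => (s a * s b) ^ ((k : ℤ) + 1 - 2 * m) * s b))
      (List.range m) := by
    apply List.map_congr_left
    intro k _
    simp only [Function.comp]
    congr 2
    have harith : ((m + k : ℕ) : ℤ) + 1 - 2 * m = ((k : ℤ) + 1 - 2 * m) + m := by
      push_cast; ring
    rw [harith, zpow_add, hqz, mul_one]
  rw [heq]
  exact Int.units_mul_self _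

theorem prod_altl_eta (m : ℕ) :
    ((altl a b m).map (eta cs)).prod = (eta cs a * eta cs b) ^ m := by
  induction m with
  | zero => simp [altl]
  | succ m ih =>
    rw [altl, List.map_cons, List.map_cons, List.prod_cons, List.prod_cons, ih, pow_succ',
      mul_assoc]

theorem eta_liftable : M.IsLiftable (fun i => eta cs i) := by
  intro i i'
  have h := prod_altl_eta cs i i' (M i i')
  show (eta cs i * eta cs i') ^ M.M i i' = 1
  rw [← h]
  apply Equiv.ext
  intro p
  obtain ⟨t, e⟩ := p
  rw [prod_eta_map, wordProd_altl, cs.simple_mul_simple_pow, sgn_altl]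
  simp

/-- The sign representation of the Coxeter group. -/
noncomputable def phi : W →* Equiv.Perm (W × ℤˣ) :=
  cs.lift ⟨fun i => eta cs i, eta_liftable cs⟩

theorem phi_simple (i : B) : phi cs (s i) = eta cs i :=
  cs.lift_apply_simple (eta_liftable cs) i

theorem phi_wordProd (l : List B) : phi cs (π l) = (l.map (eta cs)).prod := by
  induction l with
  | nil => rw [cs.wordProd_nil, List.map_nil, List.prod_nil, map_one]
  | cons i l ih =>
    rw [cs.wordProd_cons, map_mul, phi_simple, List.map_cons, List.prod_cons, ih]

theorem sgn_eq_of_wordProd_eq {l l' : List B} (h : π l = π l') (t : W) :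
    sgn cs l t = sgn cs l' t := by
  have h1 := prod_eta_map cs l t 1
  have h2 := prod_eta_map cs l' t 1
  have hprod : (l.map (eta cs)).prod = (l'.map (eta cs)).prod := by
    rw [← phi_wordProd, ← phi_wordProd, h]
  rw [hprod, h2] at h1
  have := congrArg Prod.snd h1
  simpa using this.symm

theorem mem_rightInvSeq_of_sgn_ne_one {l : List B} {t : W} (h : sgn cs l t ≠ 1) :
    t ∈ cs.rightInvSeq l := by
  by_contra hmem
  apply h
  apply List.prod_eq_one
  intro x hx
  rw [List.mem_map] at hx
  obtain ⟨u, hu, rfl⟩ := hx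
  rw [if_neg]
  intro he
  exact hmem (he ▸ hu)

/-- The (simple) exchange property. -/
theorem simple_exchange {ω : List B} (hred : cs.IsReduced ω) {j : B}
    (hdesc : ℓ (π ω * s j) < ℓ (π ω)) :
    ∃ k, k < ω.length ∧ π ω * s j = π (ω.eraseIdx k) := by
  obtain ⟨ω', hlen, hw'⟩ := cs.exists_reduced_word (π ω * s j)
  have hred' : cs.IsReduced ω' := hlen
  have hπ : π (ω'.concat j) = π ω := by
    rw [cs.wordProd_concat, ← hw', mul_assoc, cs.simple_mul_simple_self, mul_one]
  have hnot : s j ∉ cs.rightInvSeq ω' := by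
    intro hmem
    have h2 := (cs.isRightInversion_of_mem_rightInvSeq hred' hmem).2
    rw [← hw', mul_assoc, cs.simple_mul_simple_self, mul_one] at h2
    omega
  have hsgn' : sgn cs (ω'.concat j) (s j) = -1 := by
    rw [sgn, cs.rightInvSeq_concat, List.concat_eq_append, List.map_append, List.prod_append,
      List.map_map]
    have h1 : (List.map ((fun u => if u = s j then (-1 : ℤˣ) else 1) ∘
        (MulAut.conj (s j) : W ≃* W)) (cs.rightInvSeq ω')).prod = 1 := by
      apply List.prod_eq_one
      intro x hx
      rw [List.mem_map] at hx
      obtain ⟨u, hu, rfl⟩ := hx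
      simp only [Function.comp_apply, MulAut.conj_apply]
      refine if_neg ?_
      intro he
      apply hnot
      have hu' : u = s j := by
        have hL : (s j)⁻¹ * (s j * u * (s j)⁻¹) * s j = u := by group
        have h2 : (s j)⁻¹ * (s j * u * (s j)⁻¹) * s j = (s j)⁻¹ * s j * s j := by rw [he]
        rw [← hL, h2, inv_mul_cancel, one_mul]
      rw [← hu']
      exact hu
    rw [h1, one_mul]
    simp
  have hsgn : sgn cs ω (s j) = -1 :=
    (sgn_eq_of_wordProd_eq cs hπ.symm (s j)).trans hsgn'
  have hmem : s j ∈ cs.rightInvSeq ω := by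
    apply mem_rightInvSeq_of_sgn_ne_one cs
    rw [hsgn]
    decide
  obtain ⟨k, hk, hgetk⟩ := List.mem_iff_getElem.mp hmem
  have hk' : k < ω.length := by
    have := cs.length_rightInvSeq ω
    omega
  refine ⟨k, hk', ?_⟩
  have hh := cs.wordProd_mul_getD_rightInvSeq ω k
  rw [List.getD_eq_getElem _ _ hk, hgetk] at hh
  exact hh

/-! ### Parabolic subgroups -/

theorem mem_parabolic_iff (X : Set B) (w : W) :
    w ∈ cs.parabolic X ↔ ∃ l : List B, (∀ i ∈ l, i ∈ X) ∧ π l = w := by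
  constructor
  · intro hw
    induction hw using Subgroup.closure_induction with
    | mem x hx =>
      obtain ⟨i, hi, rfl⟩ := hx
      exact ⟨[i], by simpa using hi, by simp⟩
    | one => exact ⟨[], by simp, by simp⟩
    | mul x y hx hy ihx ihy =>
      obtain ⟨l1, h1, rfl⟩ := ihx
      obtain ⟨l2, h2, rfl⟩ := ihy
      refine ⟨l1 ++ l2, ?_, by rw [cs.wordProd_append]⟩
      intro i hi
      rcases List.mem_append.mp hi with h | h
      exacts [h1 i h, h2 i h]
    | inv x hx ihx =>
      obtain ⟨l, h1, rfl⟩ := ihx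
      exact ⟨l.reverse, fun i hi => h1 i (List.mem_reverse.mp hi), by
        rw [cs.wordProd_reverse]⟩
  · rintro ⟨l, hl, rfl⟩
    induction l with
    | nil =>
      rw [cs.wordProd_nil]
      exact (cs.parabolic X).one_mem
    | cons i l ih =>
      rw [cs.wordProd_cons]
      exact mul_mem (Subgroup.subset_closure ⟨i, hl i List.mem_cons_self, rfl⟩)
        (ih fun i' hi' => hl i' (List.mem_cons_of_mem _ hi'))

theorem parabolic_mono {X Y : Set B} (h : X ⊆ Y) : cs.parabolic X ≤ cs.parabolic Y :=
  Subgroup.closure_mono (Set.image_mono h)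

/-- Key lemma: multiplying a minimal coset representative by a word in `Y` gives
an additive length, and the word can be replaced by a reduced one in `Y`. -/
theorem min_mul_word {Y : Set B} {w : W} (hw : cs.IsMinimalCosetRep Y w) :
    ∀ l : List B, (∀ i ∈ l, i ∈ Y) →
      ∃ l' : List B, (∀ i ∈ l', i ∈ Y) ∧ π l' = π l ∧ ℓ (w * π l) = ℓ w + l'.length := by
  intro l
  induction l using List.reverseRecOn with
  | nil =>
    intro _
    exact ⟨[], by simp, rfl, by rw [cs.wordProd_nil, mul_one, List.length_nil, Nat.add_zero]⟩
  | append_singleton l j ih =>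
    intro hmem
    have hmem0 : ∀ i ∈ l, i ∈ Y := fun i hi => hmem i (List.mem_append_left _ hi)
    have hjY : j ∈ Y := hmem j (by simp)
    obtain ⟨l0, hl0Y, hl0prod, hl0len⟩ := ih hmem0
    obtain ⟨ωa, hωalen, hωaprod⟩ := cs.exists_reduced_word w
    have hωalen' : ℓ w = ωa.length := by rw [hωaprod]; exact hωalen
    have hπω : π (ωa ++ l0) = w * π l := by
      rw [cs.wordProd_append, ← hωaprod, hl0prod]
    have hred : cs.IsReduced (ωa ++ l0) := by
      rw [CoxeterSystem.IsReduced, hπω, hl0len, List.length_append, hωalen']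
    have hπlj : π (l ++ [j]) = π l * s j := by
      rw [cs.wordProd_append, cs.wordProd_singleton]
    rcases cs.length_mul_simple (w * π l) j with hup | hdown
    · refine ⟨l0 ++ [j], ?_, ?_, ?_⟩
      · intro i hi
        rcases List.mem_append.mp hi with h | h
        · exact hl0Y i h
        · rw [List.mem_singleton] at h
          exact h ▸ hjY
      · rw [cs.wordProd_append, cs.wordProd_append, hl0prod]
      · rw [hπlj, ← mul_assoc, hup, hl0len, List.length_append, List.length_singleton,
          Nat.add_assoc]
    · have hlt : ℓ (π (ωa ++ l0) * s j) < ℓ (π (ωa ++ l0)) := by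
        rw [hπω]
        omega
      obtain ⟨k, hk, hex⟩ := simple_exchange cs hred hlt
      rw [hπω] at hex
      by_cases hcase : k < ωa.length
      · exfalso
        rw [List.eraseIdx_append_of_lt_length hcase, cs.wordProd_append, hl0prod] at hex
        have hu : π l * s j * (π l)⁻¹ ∈ cs.parabolic Y := by
          rw [mem_parabolic_iff]
          refine ⟨l ++ [j] ++ l.reverse, ?_, ?_⟩
          · intro i hi
            rcases List.mem_append.mp hi with h | h
            · rcases List.mem_append.mp h with h' | h'
              · exact hmem0 i h'
              · rw [List.mem_singleton] at h'
                exact h' ▸ hjY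
            · exact hmem0 i (List.mem_reverse.mp h)
          · rw [cs.wordProd_append, cs.wordProd_append, cs.wordProd_singleton,
              cs.wordProd_reverse]
        have hle := hw _ hu
        have heq : w * (π l * s j * (π l)⁻¹) = π (ωa.eraseIdx k) := by
          rw [← mul_assoc, ← mul_assoc]
          rw [hex]
          group
        rw [heq] at hle
        have hle2 : ℓ (π (ωa.eraseIdx k)) ≤ (ωa.eraseIdx k).length :=
          cs.length_wordProd_le _
        have hlen' : (ωa.eraseIdx k).length + 1 = ωa.length :=
          List.length_eraseIdx_add_one hcase
        omega
      · push_neg at hcase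
        rw [List.eraseIdx_append_of_length_le hcase, cs.wordProd_append, ← hωaprod] at hex
        have hcancel : π l * s j = π (l0.eraseIdx (k - ωa.length)) := by
          apply mul_left_cancel (a := w)
          rw [← mul_assoc]
          exact hex
        have hk'lt : k - ωa.length < l0.length := by
          rw [List.length_append] at hk
          omega
        refine ⟨l0.eraseIdx (k - ωa.length), ?_, ?_, ?_⟩
        · intro i hi
          exact hl0Y i ((List.eraseIdx_sublist l0 (k - ωa.length)).mem hi)
        · rw [← hcancel, hπlj]
        · rw [hπlj, ← mul_assoc]
          have hlen' : (l0.eraseIdx (k - ωa.length)).length + 1 = l0.length :=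
            List.length_eraseIdx_add_one hk'lt
          omega

/-- Additivity of length across a minimal coset representative. -/
theorem length_min_mul {Y : Set B} {w c : W} (hw : cs.IsMinimalCosetRep Y w)
    (hc : c ∈ cs.parabolic Y) : ℓ (w * c) = ℓ w + ℓ c := by
  obtain ⟨l, hlY, rfl⟩ := (mem_parabolic_iff cs Y c).mp hc
  obtain ⟨l', hl'Y, hl'prod, hlen⟩ := min_mul_word cs hw l hlY
  have h1 : ℓ (π l) ≤ l'.length := by
    rw [← hl'prod]
    exact cs.length_wordProd_le l'
  have h2 : ℓ (w * π l) ≤ ℓ w + ℓ (π l) := cs.length_mul_le w (π l)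
  omega

end CoxAux

/-- the relation `⪯` on `W × 𝒮^f` is a partial order. -/
theorem stmt_0 {B W : Type*} [Finite B] [Group W] {M : CoxeterMatrix B}
    (cs : CoxeterSystem M W) :
    IsPartialOrder {p : W × Set B // ((cs.parabolic p.2 : Set W)).Finite}
      (fun a b => a.1.2 ⊆ b.1.2 ∧ (b.1.1)⁻¹ * a.1.1 ∈ cs.parabolic b.1.2 ∧
        cs.IsMinimalCosetRep a.1.2 ((b.1.1)⁻¹ * a.1.1)) := by
  refine { refl := ?_, trans := ?_, antisymm := ?_ }
  · intro p
    refine ⟨subset_rfl, by rw [inv_mul_cancel]; exact one_mem _, ?_⟩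
    intro u hu
    rw [inv_mul_cancel, one_mul, cs.length_one]
    exact Nat.zero_le _
  · rintro p q r ⟨hsub1, hmem1, hmin1⟩ ⟨hsub2, hmem2, hmin2⟩
    refine ⟨hsub1.trans hsub2, ?_, ?_⟩
    · have h : (r.1.1⁻¹ * q.1.1) * (q.1.1⁻¹ * p.1.1) = r.1.1⁻¹ * p.1.1 := by group
      rw [← h]
      exact mul_mem hmem2 (CoxAux.parabolic_mono cs hsub2 hmem1)
    · intro u hu
      have huY : u ∈ cs.parabolic q.1.2 :=
        CoxAux.parabolic_mono cs hsub1 hu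
      have e1 : r.1.1⁻¹ * p.1.1 = (r.1.1⁻¹ * q.1.1) * (q.1.1⁻¹ * p.1.1) := by group
      have e2 : r.1.1⁻¹ * p.1.1 * u = (r.1.1⁻¹ * q.1.1) * ((q.1.1⁻¹ * p.1.1) * u) := by group
      rw [e2, e1, CoxAux.length_min_mul cs hmin2 hmem1,
        CoxAux.length_min_mul cs hmin2 (mul_mem hmem1 huY)]
      exact Nat.add_le_add_left (hmin1 u hu) _
  · rintro p q ⟨hsub1, hmem1, hmin1⟩ ⟨hsub2, hmem2, hmin2⟩
    have hXY : p.1.2 = q.1.2 := Set.Subset.antisymm hsub1 hsub2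
    have hmem : q.1.1⁻¹ * p.1.1 ∈ cs.parabolic p.1.2 := by rw [hXY]; exact hmem1
    have hinv : (q.1.1⁻¹ * p.1.1)⁻¹ ∈ cs.parabolic p.1.2 := inv_mem hmem
    have hle := hmin1 _ hinv
    rw [mul_inv_cancel, cs.length_one] at hle
    have h1 : cs.length (q.1.1⁻¹ * p.1.1) = 0 := Nat.le_zero.mp hle
    have h2 : q.1.1⁻¹ * p.1.1 = 1 := cs.length_eq_zero_iff.mp h1
    have h3 : p.1.1 = q.1.1 := (inv_mul_eq_one.mp h2).symm
    exact Subtype.ext (Prod.ext h3 hXY)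
end

section
/- Let V = ℝ^ℓ, let I ⊆ V be a nonempty open convex cone, and let H₁,…,H_k be hyperplanes given as kernels of linearly independent linear forms α₁,…,α_k on V. Suppose L = H₁ ∩ ⋯ ∩ H_k meets I. For each i, let H_i^+ = {x ∈ V : α_i(x) > 0}. Then the set (⋃_{i=1}^k H_i^+) ∩ I is contractible; in fact it deformation retracts to a point q₀ via straight-line homotopy h_t(p) = (1−t)p + t q₀ for a suitably chosen q₀ in the set. -/
/-- Linearly independent functionals are jointly surjective. -/
lemma pi_surj_of_indep {l k : ℕ} (α : Fin k → ((Fin l → ℝ) →ₗ[ℝ] ℝ))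
    (hind : LinearIndependent ℝ α) :
    Function.Surjective (LinearMap.pi α) := by
  rw [← LinearMap.range_eq_top]
  by_contra h
  obtain ⟨f, hf0, hf⟩ := Submodule.exists_dual_map_eq_bot_of_lt_top
    (lt_top_iff_ne_top.mpr h) inferInstance
  set c : Fin k → ℝ := fun i => f (Pi.single i 1) with hc
  have key : ∀ x : Fin k → ℝ, f x = ∑ i, x i * c i := by
    intro x
    conv_lhs => rw [pi_eq_sum_univ x]
    rw [map_sum]
    refine Finset.sum_congr rfl fun i _ => ?_
    rw [map_smul, smul_eq_mul]
    congr 1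
    congr 1
    ext j
    simp [Pi.single_apply, eq_comm]
  have hvan : ∀ v : Fin l → ℝ, f (LinearMap.pi α v) = 0 := by
    intro v
    have : f (LinearMap.pi α v) ∈ Submodule.map f (LinearMap.range (LinearMap.pi α)) :=
      Submodule.mem_map_of_mem (LinearMap.mem_range_self _ v)
    rw [hf] at this
    simpa using this
  have hczero : ∀ i, c i = 0 := by
    have := Fintype.linearIndependent_iff.mp hind c ?_
    · exact this
    · refine LinearMap.ext fun v => ?_
      have := hvan v
      rw [key] at this
      simpa [LinearMap.pi_apply, mul_comm] using this
  apply hf0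
  refine LinearMap.ext fun x => ?_
  rw [key]
  simp [hczero]

/-- if `I ⊆ ℝ^ℓ` is a nonempty open convex cone and `H₁,…,H_k` are
independent hyperplanes (kernels of linearly independent linear forms `αᵢ`) whose
intersection `L` meets `I`, then `(⋃ᵢ Hᵢ⁺) ∩ I` is star-shaped around a suitable point
`q₀` (so the straight-line homotopy to `q₀` stays in the set) and is contractible. -/
theorem stmt_6 (l k : ℕ) (hk : 0 < k) (I : Set (Fin l → ℝ))
    (hne : I.Nonempty) (hop : IsOpen I) (hconv : Convex ℝ I)
    (hcone : ∀ x ∈ I, ∀ c : ℝ, 0 < c → c • x ∈ I)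
    (α : Fin k → ((Fin l → ℝ) →ₗ[ℝ] ℝ))
    (hind : LinearIndependent ℝ α)
    (hL : ((⋂ i, {x | α i x = 0}) ∩ I).Nonempty) :
    (∃ q₀ ∈ (⋃ i, {x | 0 < α i x}) ∩ I,
        StarConvex ℝ q₀ ((⋃ i, {x | 0 < α i x}) ∩ I)) ∧
      ContractibleSpace ((⋃ i, {x | 0 < α i x}) ∩ I : Set (Fin l → ℝ)) := by
  obtain ⟨p, hpL, hpI⟩ := hL
  have hpz : ∀ i, α i p = 0 := by
    intro i
    have := Set.mem_iInter.mp hpL i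
    exact this
  obtain ⟨v, hv⟩ := pi_surj_of_indep α hind (fun _ => (1 : ℝ))
  have hv1 : ∀ i, α i v = 1 := fun i => congrFun hv i
  obtain ⟨ε, hε, hball⟩ := Metric.isOpen_iff.mp hop p hpI
  set δ : ℝ := ε / (2 * (‖v‖ + 1)) with hδdef
  have hvpos : (0:ℝ) < ‖v‖ + 1 := by positivity
  have hδ : 0 < δ := by positivity
  set q₀ : Fin l → ℝ := p + δ • v with hq₀
  have hq₀I : q₀ ∈ I := by
    apply hball
    rw [Metric.mem_ball, dist_eq_norm]
    have : q₀ - p = δ • v := by rw [hq₀]; abel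
    rw [this, norm_smul, Real.norm_eq_abs, abs_of_pos hδ]
    calc δ * ‖v‖ < δ * (‖v‖ + 1) := by nlinarith
      _ = ε / 2 := by rw [hδdef, div_mul_eq_mul_div, div_eq_div_iff (by positivity) (by positivity)]; ring
      _ < ε := by linarith
  have hαq₀ : ∀ i, α i q₀ = δ := by
    intro i
    rw [hq₀]
    simp [hpz i, hv1 i]
  have hq₀mem : q₀ ∈ (⋃ i, {x | 0 < α i x}) ∩ I := by
    refine ⟨Set.mem_iUnion.mpr ⟨⟨0, hk⟩, ?_⟩, hq₀I⟩
    simpa [hαq₀] using hδ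
  have hstar : StarConvex ℝ q₀ ((⋃ i, {x | 0 < α i x}) ∩ I) := by
    intro y hy a b ha hb hab
    obtain ⟨hyU, hyI⟩ := hy
    obtain ⟨i, hi⟩ := Set.mem_iUnion.mp hyU
    refine ⟨Set.mem_iUnion.mpr ⟨i, ?_⟩, hconv hq₀I hyI ha hb hab⟩
    have hiy : 0 < α i y := hi
    show 0 < α i (a • q₀ + b • y)
    rw [map_add, map_smul, map_smul, smul_eq_mul, smul_eq_mul, hαq₀ i]
    rcases ha.lt_or_eq with h | h
    · nlinarith
    · have : b = 1 := by linarith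
      rw [← h, this]; simpa using hiy
  exact ⟨⟨q₀, hq₀mem, hstar⟩, hstar.contractibleSpace ⟨q₀, hq₀mem⟩⟩
end

section
/- Let (W,S) be a Coxeter system. Fix s ∈ S. For X ⊆ S with W_X finite and u the (∅,X)-minimal element of a coset uW_X, say the coset uW_X is s-minimal if ℓ(su) = ℓ(u) + 1 and su is (∅,X)-minimal. Then: uW_X is s-minimal if and only if ℓ(suw) = ℓ(u) + ℓ(w) + 1 for all w ∈ W_X. Consequently, if uW_X is s-minimal and vW_Y ⊆ uW_X (with Y ⊆ S, W_Y finite), then vW_Y is s-minimal. -/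
/-- The coset `u W_X` (with `u` its `(∅,X)`-minimal representative) is `s`-minimal. -/
def CoxeterSystem.IsSMinimal {B W : Type*} [Group W] {M : CoxeterMatrix B}
    (cs : CoxeterSystem M W) (s : B) (X : Set B) (u : W) : Prop :=
  cs.length (cs.simple s * u) = cs.length u + 1 ∧
    cs.IsMinimalCosetRep X (cs.simple s * u)

namespace StrongExchAux

open List CoxeterSystem

variable {B W : Type*} [Group W] {M : CoxeterMatrix B} (cs : CoxeterSystem M W)

/-- Sign indicator: `-1` if `t = r`, else `1`. -/
noncomputable def chi (r t : W) : ℤˣ := by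
  classical exact if t = r then -1 else 1

lemma chi_mul_self (r t : W) : chi r t * chi r t = 1 := by
  unfold chi; split <;> simp

lemma chi_congr {r t r' t' : W} (h : (t = r) ↔ (t' = r')) : chi r t = chi r' t' := by
  unfold chi
  split <;> split <;> first | rfl | (exfalso; tauto)

lemma simple_conj_conj (i : B) (t : W) :
    cs.simple i * (cs.simple i * t * cs.simple i) * cs.simple i = t := by
  calc cs.simple i * (cs.simple i * t * cs.simple i) * cs.simple i
      = (cs.simple i * cs.simple i) * t * (cs.simple i * cs.simple i) := by group
    _ = t := by rw [cs.simple_mul_simple_self]; rw [one_mul, mul_one]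

lemma simple_conj_eq_iff (i : B) (t : W) :
    cs.simple i * t * cs.simple i = cs.simple i ↔ t = cs.simple i := by
  constructor
  · intro h
    have h2 := congrArg (fun x => cs.simple i * x * cs.simple i) h
    rw [simple_conj_conj] at h2
    rw [h2]
    calc cs.simple i * cs.simple i * cs.simple i
        = 1 * cs.simple i := by rw [cs.simple_mul_simple_self]
      _ = cs.simple i := one_mul _
  · intro h
    rw [h, cs.simple_mul_simple_self, one_mul]

/-- The underlying function of the Tits sign permutation. -/
noncomputable def nuFun (i : B) (p : W × ℤˣ) : W × ℤˣ :=
  (cs.simple i * p.1 * cs.simple i, chi (cs.simple i) p.1 * p.2)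

lemma nuFun_involutive (i : B) : Function.Involutive (nuFun cs i) := by
  intro p
  unfold nuFun
  rw [Prod.mk.injEq]
  constructor
  · exact simple_conj_conj cs i p.1
  · have h2 : chi (cs.simple i) (cs.simple i * p.1 * cs.simple i) = chi (cs.simple i) p.1 :=
      chi_congr (simple_conj_eq_iff cs i p.1)
    rw [h2, ← mul_assoc, chi_mul_self, one_mul]

/-- The Tits sign permutation attached to a simple generator. -/
noncomputable def nu (i : B) : Equiv.Perm (W × ℤˣ) :=
  (nuFun_involutive cs i).toPerm

lemma nu_apply (i : B) (p : W × ℤˣ) :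
    nu cs i p = (cs.simple i * p.1 * cs.simple i, chi (cs.simple i) p.1 * p.2) := rfl

lemma simple_conj_pow (i j : B) (k : ℕ) :
    cs.simple j * (cs.simple i * cs.simple j) ^ k * cs.simple j
      = ((cs.simple i * cs.simple j) ^ k)⁻¹ := by
  have hinv : (cs.simple j : W)⁻¹ = cs.simple j := cs.inv_simple j
  have h1 : cs.simple j * (cs.simple i * cs.simple j) * (cs.simple j)⁻¹
      = (cs.simple i * cs.simple j)⁻¹ := by
    rw [hinv, mul_inv_rev, cs.inv_simple, cs.inv_simple]
    calc cs.simple j * (cs.simple i * cs.simple j) * cs.simple j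
        = cs.simple j * cs.simple i * (cs.simple j * cs.simple j) := by group
      _ = cs.simple j * cs.simple i := by rw [cs.simple_mul_simple_self]; group
  calc cs.simple j * (cs.simple i * cs.simple j) ^ k * cs.simple j
      = (cs.simple j * (cs.simple i * cs.simple j) * (cs.simple j)⁻¹) ^ k := by
        rw [conj_pow]; rw [hinv]
    _ = ((cs.simple i * cs.simple j)⁻¹) ^ k := by rw [h1]
    _ = ((cs.simple i * cs.simple j) ^ k)⁻¹ := by rw [inv_pow]

lemma nu_mul_nu_pow (i j : B) (k : ℕ) (p : W × ℤˣ) :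
    ((nu cs i * nu cs j) ^ k) p =
      ((cs.simple i * cs.simple j) ^ k * p.1 * ((cs.simple i * cs.simple j) ^ k)⁻¹,
        (∏ d ∈ Finset.range (2 * k),
          chi (cs.simple j * (cs.simple i * cs.simple j) ^ d) p.1) * p.2) := by
  set a := cs.simple i * cs.simple j with ha
  have hainv : a⁻¹ = cs.simple j * cs.simple i := by
    rw [ha, mul_inv_rev, cs.inv_simple, cs.inv_simple]
  induction k with
  | zero =>
    simp only [pow_zero, Equiv.Perm.coe_one, id_eq, Nat.mul_zero, Finset.range_zero,
      Finset.prod_empty, one_mul, inv_one, mul_one]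
  | succ k ih =>
    have hstep : (nu cs i * nu cs j) ^ (k + 1) = (nu cs i * nu cs j) * (nu cs i * nu cs j) ^ k :=
      pow_succ' _ _
    rw [hstep, Equiv.Perm.mul_apply, ih, Equiv.Perm.mul_apply, nu_apply, nu_apply]
    have hq2k : (a ^ k)⁻¹ * cs.simple j * a ^ k = cs.simple j * a ^ (2 * k) := by
      have h := simple_conj_pow cs i j k
      rw [← ha] at h
      have h' : (a ^ k)⁻¹ = cs.simple j * a ^ k * cs.simple j := by
        rw [h]
      calc (a ^ k)⁻¹ * cs.simple j * a ^ k
          = cs.simple j * a ^ k * cs.simple j * cs.simple j * a ^ k := by rw [h']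
        _ = cs.simple j * a ^ k * (cs.simple j * cs.simple j) * a ^ k := by group
        _ = cs.simple j * (a ^ k * a ^ k) := by rw [cs.simple_mul_simple_self]; group
        _ = cs.simple j * a ^ (2 * k) := by rw [two_mul, pow_add]
    have hq2k1 : (a ^ k)⁻¹ * (cs.simple j * cs.simple i * cs.simple j) * a ^ k
        = cs.simple j * a ^ (2 * k + 1) := by
      have h := simple_conj_pow cs i j (k + 1)
      rw [← ha] at h
      have h' : (a ^ (k+1))⁻¹ = cs.simple j * a ^ (k+1) * cs.simple j := by rw [h]
      have key : cs.simple j * cs.simple i * cs.simple j = a⁻¹ * cs.simple j := by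
        rw [hainv]
      calc (a ^ k)⁻¹ * (cs.simple j * cs.simple i * cs.simple j) * a ^ k
          = (a ^ (k+1))⁻¹ * cs.simple j * a ^ k := by
            rw [key, pow_succ]; group
        _ = cs.simple j * a ^ (k+1) * (cs.simple j * cs.simple j) * a ^ k := by
            rw [h']; group
        _ = cs.simple j * (a ^ (k+1) * a ^ k) := by
            rw [cs.simple_mul_simple_self]; group
        _ = cs.simple j * a ^ (2 * k + 1) := by
            rw [← pow_add]
            congr 2
            omega
    dsimp only
    rw [Prod.mk.injEq]
    constructor
    · calc cs.simple i * (cs.simple j * (a ^ k * p.1 * (a ^ k)⁻¹) * cs.simple j) * cs.simple i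
          = (cs.simple i * cs.simple j) * a ^ k * p.1 * (a ^ k)⁻¹
              * (cs.simple j * cs.simple i) := by group
        _ = a * a ^ k * p.1 * (a ^ k)⁻¹ * a⁻¹ := by rw [← ha, ← hainv]
        _ = a ^ (k+1) * p.1 * (a ^ (k+1))⁻¹ := by group
    · have e1 : chi (cs.simple j) (a ^ k * p.1 * (a ^ k)⁻¹)
          = chi (cs.simple j * a ^ (2 * k)) p.1 := by
        apply chi_congr
        rw [← hq2k]
        constructor
        · intro h
          have h3 := congrArg (fun x => (a ^ k)⁻¹ * x * a ^ k) h
          simpa [mul_assoc] using h3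
        · intro h
          rw [h]; group
      have e2 : chi (cs.simple i) (cs.simple j * (a ^ k * p.1 * (a ^ k)⁻¹) * cs.simple j)
          = chi (cs.simple j * a ^ (2 * k + 1)) p.1 := by
        apply chi_congr
        rw [← hq2k1]
        constructor
        · intro h
          have h2 := congrArg (fun x => cs.simple j * x * cs.simple j) h
          rw [simple_conj_conj] at h2
          have h3 := congrArg (fun x => (a ^ k)⁻¹ * x * a ^ k) h2
          simpa [mul_assoc] using h3
        · intro h
          rw [h]
          have hcanc : a ^ k * ((a ^ k)⁻¹ * (cs.simple j * cs.simple i * cs.simple j) * a ^ k)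
              * (a ^ k)⁻¹ = cs.simple j * cs.simple i * cs.simple j := by group
          rw [hcanc]
          exact simple_conj_conj cs j (cs.simple i)
      rw [e1, e2]
      have hprod : (∏ d ∈ Finset.range (2 * (k+1)), chi (cs.simple j * a ^ d) p.1)
          = chi (cs.simple j * a ^ (2*k+1)) p.1 * (chi (cs.simple j * a ^ (2*k)) p.1 *
            (∏ d ∈ Finset.range (2 * k), chi (cs.simple j * a ^ d) p.1)) := by
        have h2 : 2 * (k + 1) = (2 * k) + 1 + 1 := by omega
        rw [h2, Finset.prod_range_succ, Finset.prod_range_succ]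
        simp [mul_assoc, mul_comm, mul_left_comm]
      rw [hprod]
      simp [mul_assoc, mul_comm, mul_left_comm]

lemma nu_liftable : M.IsLiftable (nu cs) := by
  intro i j
  apply Equiv.ext
  intro p
  rw [nu_mul_nu_pow cs i j (M i j) p, Equiv.Perm.one_apply, cs.simple_mul_simple_pow i j]
  rw [Prod.mk.injEq]
  constructor
  · rw [inv_one, one_mul, mul_one]
  · have hone : (∏ d ∈ Finset.range (2 * M i j),
        chi (cs.simple j * (cs.simple i * cs.simple j) ^ d) p.1) = 1 := by
      rw [two_mul, Finset.prod_range_add]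
      have heq : ∀ x, chi (cs.simple j * (cs.simple i * cs.simple j) ^ (M i j + x)) p.1
          = chi (cs.simple j * (cs.simple i * cs.simple j) ^ x) p.1 := by
        intro x
        congr 2
        rw [pow_add, cs.simple_mul_simple_pow i j, one_mul]
      rw [Finset.prod_congr rfl (fun x _ => heq x), ← Finset.prod_mul_distrib]
      apply Finset.prod_eq_one
      intro x _
      exact chi_mul_self _ _
    rw [hone, one_mul]

/-- The Tits sign representation. -/
noncomputable def psi : W →* Equiv.Perm (W × ℤˣ) :=
  CoxeterSystem.lift cs ⟨nu cs, nu_liftable cs⟩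

lemma psi_simple (i : B) : psi cs (cs.simple i) = nu cs i :=
  cs.lift_apply_simple (nu_liftable cs) i

lemma psi_wordProd (ω : List B) (t : W) (ε : ℤˣ) :
    psi cs (cs.wordProd ω) (t, ε) =
      (cs.wordProd ω * t * (cs.wordProd ω)⁻¹,
        ((cs.rightInvSeq ω).map (fun r => chi r t)).prod * ε) := by
  induction ω with
  | nil => simp [cs.wordProd_nil, CoxeterSystem.rightInvSeq]
  | cons i ω ih =>
    rw [cs.wordProd_cons, map_mul, Equiv.Perm.mul_apply, ih, psi_simple, nu_apply]
    have hris : cs.rightInvSeq (i :: ω)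
        = ((cs.wordProd ω)⁻¹ * cs.simple i * cs.wordProd ω) :: cs.rightInvSeq ω := rfl
    rw [hris]
    dsimp only
    rw [Prod.mk.injEq]
    constructor
    · rw [mul_inv_rev, cs.inv_simple]
      group
    · rw [List.map_cons, List.prod_cons]
      have e : chi (cs.simple i) (cs.wordProd ω * t * (cs.wordProd ω)⁻¹)
          = chi ((cs.wordProd ω)⁻¹ * cs.simple i * cs.wordProd ω) t := by
        apply chi_congr
        constructor
        · intro h
          have h3 := congrArg (fun x => (cs.wordProd ω)⁻¹ * x * cs.wordProd ω) h
          simpa [mul_assoc] using h3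
        · intro h; rw [h]; group
      rw [e]
      simp [mul_assoc, mul_comm, mul_left_comm]

/-- The sign cocycle. -/
noncomputable def eta (w t : W) : ℤˣ := (psi cs w (t, 1)).2

lemma psi_apply (w t : W) (ε : ℤˣ) :
    psi cs w (t, ε) = (w * t * w⁻¹, eta cs w t * ε) := by
  obtain ⟨ω, rfl⟩ := cs.wordProd_surjective w
  rw [psi_wordProd]
  unfold eta
  rw [psi_wordProd]
  simp

lemma eta_mul (u v t : W) : eta cs (u * v) t = eta cs v t * eta cs u (v * t * v⁻¹) := by
  unfold eta
  rw [map_mul, Equiv.Perm.mul_apply, psi_apply, psi_apply, psi_apply]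
  simp [mul_comm]

lemma eta_simple (i : B) (t : W) : eta cs (cs.simple i) t = chi (cs.simple i) t := by
  unfold eta
  rw [psi_simple, nu_apply]
  simp

lemma eta_one (t : W) : eta cs 1 t = 1 := by
  unfold eta; rw [map_one]; rfl

lemma eta_sq (w t : W) : eta cs w t * eta cs w t = 1 := by
  rcases Int.units_eq_one_or (eta cs w t) with h | h <;> rw [h] <;> rfl

lemma eta_refl (t : W) (ht : cs.IsReflection t) : eta cs t t = -1 := by
  obtain ⟨q, i, rfl⟩ := ht
  set t := q * cs.simple i * q⁻¹ with hts
  have h1 : eta cs (q⁻¹) t * eta cs q (cs.simple i) = 1 := by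
    have := eta_mul cs q q⁻¹ t
    rw [mul_inv_cancel] at this
    rw [eta_one] at this
    have harg : q⁻¹ * t * (q⁻¹)⁻¹ = cs.simple i := by rw [hts]; group
    rw [harg] at this
    exact this.symm
  have h2 : eta cs t t = eta cs (q⁻¹) t * (eta cs (cs.simple i) (cs.simple i)
      * eta cs q (cs.simple i)) := by
    have step1 : eta cs ((q * cs.simple i) * q⁻¹) t
        = eta cs (q⁻¹) t * eta cs (q * cs.simple i) (q⁻¹ * t * (q⁻¹)⁻¹) := eta_mul cs _ _ _
    have harg : q⁻¹ * t * (q⁻¹)⁻¹ = cs.simple i := by rw [hts]; group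
    rw [harg] at step1
    have step2 : eta cs (q * cs.simple i) (cs.simple i)
        = eta cs (cs.simple i) (cs.simple i)
          * eta cs q (cs.simple i * cs.simple i * (cs.simple i)⁻¹) := eta_mul cs _ _ _
    have harg2 : cs.simple i * cs.simple i * (cs.simple i)⁻¹ = cs.simple i := by group
    rw [harg2] at step2
    calc eta cs t t = eta cs ((q * cs.simple i) * q⁻¹) t := by rw [hts]
      _ = eta cs (q⁻¹) t * eta cs (q * cs.simple i) (cs.simple i) := step1
      _ = eta cs (q⁻¹) t * (eta cs (cs.simple i) (cs.simple i) * eta cs q (cs.simple i)) := by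
          rw [step2]
  have h3 : eta cs (cs.simple i) (cs.simple i) = -1 := by
    rw [eta_simple]
    unfold chi
    simp
  rw [h2, h3]
  calc eta cs (q⁻¹) t * (-1 * eta cs q (cs.simple i))
      = -1 * (eta cs (q⁻¹) t * eta cs q (cs.simple i)) := by
        simp [mul_assoc, mul_comm, mul_left_comm]
    _ = -1 := by rw [h1, mul_one]

lemma eta_neg_one_of_inversion (w t : W) (ht : cs.IsReflection t)
    (h : cs.length (w * t) < cs.length w) : eta cs w t = -1 := by
  rcases Int.units_eq_one_or (eta cs w t) with h1 | h1
  · exfalso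
    have h2 : eta cs (w * t) t = -1 := by
      rw [eta_mul]
      have : t * t * t⁻¹ = t := by group
      rw [this, eta_refl cs t ht, h1]
      simp
    -- eta = -1 implies right inversion
    obtain ⟨ω, hred, hw⟩ := cs.exists_reduced_word' (w * t)
    have hmem : t ∈ cs.rightInvSeq ω := by
      by_contra hnot
      have : ((cs.rightInvSeq ω).map (fun r => chi r t)).prod = 1 := by
        apply List.prod_eq_one
        intro x hx
        obtain ⟨r, hr, rfl⟩ := List.mem_map.mp hx
        unfold chi
        rw [if_neg]
        intro hEq
        exact hnot (hEq ▸ hr)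
      have h4 : eta cs (w * t) t = 1 := by
        unfold eta
        rw [hw, psi_wordProd, this]
        simp
      rw [h4] at h2
      exact absurd h2 (by decide)
    have hinv := cs.isRightInversion_of_mem_rightInvSeq hred hmem
    rw [← hw] at hinv
    have : cs.length (w * t * t) < cs.length (w * t) := hinv.2
    have hww : w * t * t = w := by
      rw [mul_assoc, ht.mul_self, mul_one]
    rw [hww] at this
    omega
  · exact h1

/-- Strong exchange for simple reflections. -/
lemma strong_exchange (w : W) (x : B) (ω : List B) (hred : cs.IsReduced ω)
    (hw : w = cs.wordProd ω) (h : cs.length (w * cs.simple x) < cs.length w) :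
    ∃ j < ω.length, cs.wordProd (ω.eraseIdx j) = w * cs.simple x := by
  have heta : eta cs w (cs.simple x) = -1 :=
    eta_neg_one_of_inversion cs w _ (cs.isReflection_simple x) h
  have hmem : cs.simple x ∈ cs.rightInvSeq ω := by
    by_contra hnot
    have : ((cs.rightInvSeq ω).map (fun r => chi r (cs.simple x))).prod = 1 := by
      apply List.prod_eq_one
      intro y hy
      obtain ⟨r, hr, rfl⟩ := List.mem_map.mp hy
      unfold chi
      rw [if_neg]
      intro hEq
      exact hnot (hEq ▸ hr)
    have h4 : eta cs w (cs.simple x) = 1 := by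
      unfold eta
      rw [hw, psi_wordProd, this]
      simp
    rw [h4] at heta
    exact absurd heta (by decide)
  obtain ⟨j, hj, hjt⟩ := List.mem_iff_getElem.mp hmem
  rw [cs.length_rightInvSeq] at hj
  refine ⟨j, hj, ?_⟩
  have hgd : (cs.rightInvSeq ω).getD j 1 = cs.simple x := by
    rw [List.getD_eq_getElem _ _ (by rw [cs.length_rightInvSeq]; exact hj)]
    exact hjt
  have := cs.wordProd_mul_getD_rightInvSeq ω j
  rw [hgd] at this
  rw [← this, hw]

/-! ### Parabolic subgroup lemmas -/

lemma wordProd_mem_parabolic {X : Set B} {ω : List B} (hω : ∀ b ∈ ω, b ∈ X) :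
    cs.wordProd ω ∈ cs.parabolic X := by
  unfold CoxeterSystem.wordProd CoxeterSystem.parabolic
  apply Subgroup.list_prod_mem
  intro y hy
  obtain ⟨b, hb, rfl⟩ := List.mem_map.mp hy
  exact Subgroup.subset_closure ⟨b, hω b hb, rfl⟩

lemma exists_word_of_mem_parabolic {X : Set B} {w : W} (hw : w ∈ cs.parabolic X) :
    ∃ ω : List B, (∀ b ∈ ω, b ∈ X) ∧ cs.wordProd ω = w := by
  induction hw using Subgroup.closure_induction with
  | mem y hy =>
    obtain ⟨b, hb, rfl⟩ := hy
    exact ⟨[b], by simpa using hb, cs.wordProd_singleton b⟩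
  | one => exact ⟨[], by simp, cs.wordProd_nil⟩
  | mul y z hy hz ihy ihz =>
    obtain ⟨ω₁, h₁, rfl⟩ := ihy
    obtain ⟨ω₂, h₂, rfl⟩ := ihz
    refine ⟨ω₁ ++ ω₂, ?_, cs.wordProd_append ω₁ ω₂⟩
    intro b hb
    rcases List.mem_append.mp hb with h | h
    · exact h₁ b h
    · exact h₂ b h
  | inv y hy ihy =>
    obtain ⟨ω, h, rfl⟩ := ihy
    refine ⟨ω.reverse, ?_, cs.wordProd_reverse ω⟩
    intro b hb
    exact h b (List.mem_reverse.mp hb)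

/-- Key lemma: if `u` is a minimal coset representative for `W_X`, then lengths add. -/
lemma length_add_of_minimal {X : Set B} {u : W} (hu : cs.IsMinimalCosetRep X u) :
    ∀ w ∈ cs.parabolic X, cs.length (u * w) = cs.length u + cs.length w := by
  intro w hw
  obtain ⟨ω, hωX, rfl⟩ := exists_word_of_mem_parabolic cs hw
  clear hw
  induction ω using List.reverseRecOn with
  | nil => simp
  | append_singleton ω x ih =>
    have hωX' : ∀ b ∈ ω, b ∈ X := fun b hb => hωX b (List.mem_append.mpr (Or.inl hb))
    have hxX : x ∈ X := hωX x (List.mem_append.mpr (Or.inr (List.mem_singleton_self x)))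
    have ih' := ih hωX'
    set w' := cs.wordProd ω with hw'
    have hsplit : cs.wordProd (ω ++ [x]) = w' * cs.simple x := by
      rw [cs.wordProd_append, cs.wordProd_singleton]
    rw [hsplit]
    rcases cs.length_mul_simple w' x with hc | hc
    · -- ℓ(w' s_x) = ℓ w' + 1
      rw [hc]
      -- show ℓ(u w' s_x) = ℓ(u w') + 1
      by_cases hd : cs.length ((u * w') * cs.simple x) < cs.length (u * w')
      · exfalso
        -- exchange argument
        obtain ⟨κ, hκlen, hκ⟩ := cs.exists_reduced_word u
        obtain ⟨τ, hτlen, hτ⟩ := cs.exists_reduced_word w'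
        have hcat : cs.wordProd (κ ++ τ) = u * w' := by
          rw [cs.wordProd_append, ← hκ, ← hτ]
        have hcatred : cs.IsReduced (κ ++ τ) := by
          unfold CoxeterSystem.IsReduced
          rw [hcat, ih', List.length_append, hκ, hτ, (hκlen : cs.length (cs.wordProd κ) = κ.length),
            (hτlen : cs.length (cs.wordProd τ) = τ.length)]
        obtain ⟨j, hjlt, hjeq⟩ := strong_exchange cs (u * w') x (κ ++ τ) hcatred
          hcat.symm hd
        rw [List.length_append] at hjlt
        by_cases hjκ : j < κ.length
        · -- deleted letter in u part: contradiction with minimality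
          have herase : (κ ++ τ).eraseIdx j = κ.eraseIdx j ++ τ := by
            rw [List.eraseIdx_append_of_lt_length hjκ]
          rw [herase, cs.wordProd_append, ← hτ] at hjeq
          -- π(κ.eraseIdx j) = u * w' * s x * w'⁻¹
          have hval : cs.wordProd (κ.eraseIdx j) = u * (w' * cs.simple x * w'⁻¹) := by
            have h9 : cs.wordProd (κ.eraseIdx j) = (u * w' * cs.simple x) * w'⁻¹ := by
              rw [← hjeq]; group
            rw [h9]; group
          have hpmem : w' * cs.simple x * w'⁻¹ ∈ cs.parabolic X := by
            have h1 : w' ∈ cs.parabolic X := by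
              rw [hw']; exact wordProd_mem_parabolic cs hωX'
            have h2 : cs.simple x ∈ cs.parabolic X :=
              Subgroup.subset_closure ⟨x, hxX, rfl⟩
            exact mul_mem (mul_mem h1 h2) (inv_mem h1)
          have hmin := hu _ hpmem
          rw [← hval] at hmin
          have hlen : cs.length (cs.wordProd (κ.eraseIdx j)) ≤ κ.length - 1 := by
            calc cs.length (cs.wordProd (κ.eraseIdx j)) ≤ (κ.eraseIdx j).length :=
                cs.length_wordProd_le _
              _ ≤ κ.length - 1 := by rw [List.length_eraseIdx]; simp [hjκ]
          have hκl : cs.length u = κ.length := by rw [hκ]; exact hκlen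
          omega
        · -- deleted letter in w' part: contradicts ℓ(w' s_x) = ℓ w' + 1
          have hjge : κ.length ≤ j := by omega
          have herase : (κ ++ τ).eraseIdx j = κ ++ τ.eraseIdx (j - κ.length) := by
            rw [List.eraseIdx_append_of_length_le hjge]
          rw [herase, cs.wordProd_append, ← hκ] at hjeq
          have hval : cs.wordProd (τ.eraseIdx (j - κ.length)) = w' * cs.simple x := by
            rw [mul_assoc] at hjeq
            exact mul_left_cancel hjeq
          have hlt : j - κ.length < τ.length := by omega
          have : cs.length (w' * cs.simple x) ≤ τ.length - 1 := by
            calc cs.length (w' * cs.simple x)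
                = cs.length (cs.wordProd (τ.eraseIdx (j - κ.length))) := by rw [hval]
              _ ≤ (τ.eraseIdx (j - κ.length)).length := cs.length_wordProd_le _
              _ ≤ τ.length - 1 := by rw [List.length_eraseIdx]; simp [hlt]
          rw [← (hτlen : cs.length (cs.wordProd τ) = τ.length), ← hτ] at this
          omega
      · push_neg at hd
        have hne := cs.length_mul_simple_ne (u * w') x
        have : cs.length ((u * w') * cs.simple x) = cs.length (u * w') + 1 := by
          rcases cs.length_mul_simple (u * w') x with h | h
          · exact h
          · omega
        calc cs.length (u * (w' * cs.simple x)) = cs.length ((u * w') * cs.simple x) := by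
              rw [mul_assoc]
          _ = cs.length (u * w') + 1 := this
          _ = cs.length u + (cs.length w' + 1) := by rw [ih']; omega
    · -- ℓ(w' s_x) = ℓ w' - 1
      have hw'pos : 1 ≤ cs.length w' := by
        have hne := cs.length_mul_simple_ne w' x
        omega
      have hub : cs.length (u * (w' * cs.simple x)) ≤ cs.length u + cs.length (w' * cs.simple x) :=
        cs.length_mul_le _ _
      have hlb : cs.length (u * w') ≤ cs.length (u * (w' * cs.simple x)) + 1 := by
        have : u * w' = (u * (w' * cs.simple x)) * cs.simple x := by
          rw [mul_assoc, mul_assoc, cs.simple_mul_simple_self, mul_one]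
        rw [this]
        calc cs.length ((u * (w' * cs.simple x)) * cs.simple x)
            ≤ cs.length (u * (w' * cs.simple x)) + cs.length (cs.simple x) :=
              cs.length_mul_le _ _
          _ = cs.length (u * (w' * cs.simple x)) + 1 := by rw [cs.length_simple]
      rw [ih'] at hlb
      omega

end StrongExchAux

/-- `uW_X` is `s`-minimal iff `ℓ(suw) = ℓ(u) + ℓ(w) + 1` for all `w ∈ W_X`;
consequently if `uW_X` is `s`-minimal and `vW_Y ⊆ uW_X` then `vW_Y` is `s`-minimal. -/
theorem stmt_7 {B W : Type*} [Group W] {M : CoxeterMatrix B}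
    (cs : CoxeterSystem M W) (s : B) (X Y : Set B)
    (hX : ((cs.parabolic X : Set W)).Finite) (hY : ((cs.parabolic Y : Set W)).Finite)
    (u v : W) (hu : cs.IsMinimalCosetRep X u) (hv : cs.IsMinimalCosetRep Y v) :
    (cs.IsSMinimal s X u ↔
      ∀ w ∈ cs.parabolic X,
        cs.length (cs.simple s * (u * w)) = cs.length u + cs.length w + 1) ∧
    (cs.IsSMinimal s X u →
      (v * ·) '' (cs.parabolic Y : Set W) ⊆ (u * ·) '' (cs.parabolic X : Set W) →
      cs.IsSMinimal s Y v) := by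
  have hiff : cs.IsSMinimal s X u ↔
      ∀ w ∈ cs.parabolic X,
        cs.length (cs.simple s * (u * w)) = cs.length u + cs.length w + 1 := by
    constructor
    · rintro ⟨h1, h2⟩ w hw
      have key := StrongExchAux.length_add_of_minimal cs h2 w hw
      rw [mul_assoc] at key
      rw [key, h1]
      omega
    · intro h
      constructor
      · have := h 1 (one_mem _)
        rw [mul_one, cs.length_one] at this
        rw [this]
      · intro p hp
        have hp' := h p hp
        have h1 : cs.length (cs.simple s * u) = cs.length u + 1 := by
          have := h 1 (one_mem _)
          rw [mul_one, cs.length_one] at this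
          rw [this]
        rw [mul_assoc, hp', h1]
        have := cs.length_wordProd_le ([] : List B)
        omega
  refine ⟨hiff, ?_⟩
  intro hsm hsub
  have hchar := hiff.mp hsm
  -- v ∈ u W_X
  obtain ⟨p, hp, hvp⟩ : ∃ p ∈ cs.parabolic X, u * p = v := by
    have : v ∈ (v * ·) '' (cs.parabolic Y : Set W) := ⟨1, one_mem _, mul_one v⟩
    obtain ⟨p, hp, hup⟩ := hsub this
    exact ⟨p, hp, hup⟩
  have hlv : cs.length v = cs.length u + cs.length p := by
    rw [← hvp]
    exact StrongExchAux.length_add_of_minimal cs hu p hp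
  have hlsv : cs.length (cs.simple s * v) = cs.length v + 1 := by
    rw [← hvp, hchar p hp, StrongExchAux.length_add_of_minimal cs hu p hp]
  refine ⟨hlsv, ?_⟩
  intro q hq
  -- v * q ∈ u W_X
  obtain ⟨pq, hpq, hvq⟩ : ∃ pq ∈ cs.parabolic X, u * pq = v * q := by
    have : v * q ∈ (v * ·) '' (cs.parabolic Y : Set W) := ⟨q, hq, rfl⟩
    obtain ⟨pq, hpq, hupq⟩ := hsub this
    exact ⟨pq, hpq, hupq⟩
  have h1 : cs.length (cs.simple s * v * q) = cs.length (v * q) + 1 := by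
    have e1 : cs.simple s * v * q = cs.simple s * (u * pq) := by rw [mul_assoc, ← hvq]
    rw [e1, hchar pq hpq, ← hvq,
      StrongExchAux.length_add_of_minimal cs hu pq hpq]
  have h2 : cs.length v ≤ cs.length (v * q) := hv q hq
  rw [h1, hlsv]
  omega
end

section
/- Let Γ be a Coxeter graph, (W,S) its Coxeter system, A = A_Γ its Artin group, and τ : W → A the set-section of the natural projection θ : A → W defined by τ(w) = σ_{s₁}⋯σ_{s_ℓ} for any reduced expression s₁⋯s_ℓ of w. Let 𝒮^f = {X ⊆ S : W_X finite}. Define a relation ⪯ on A × 𝒮^f by (α,X) ⪯ (β,Y) if X ⊆ Y and α = β·τ(w) for some w ∈ W_Y which is (∅,X)-minimal. Then ⪯ is a partial order relation. -/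
/-- The relators of the Artin group of a Coxeter matrix `M`:
`Π(σ_i,σ_j : m_{i,j}) Π(σ_j,σ_i : m_{i,j})⁻¹` for `i ≠ j`, `m_{i,j} ≠ ∞`. -/
def ArtinGroup.rels {B : Type*} (M : CoxeterMatrix B) : Set (FreeGroup B) :=
  {r | ∃ i j : B, i ≠ j ∧ M i j ≠ 0 ∧
    r = ((CoxeterSystem.alternatingWord i j (M i j)).map FreeGroup.of).prod *
        (((CoxeterSystem.alternatingWord j i (M i j)).map FreeGroup.of).prod)⁻¹}

/-- The Artin group `A_Γ` of a Coxeter matrix `M`. -/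
def ArtinGroup {B : Type*} (M : CoxeterMatrix B) := PresentedGroup (ArtinGroup.rels M)

instance {B : Type*} (M : CoxeterMatrix B) : Group (ArtinGroup M) :=
  inferInstanceAs (Group (PresentedGroup (ArtinGroup.rels M)))

/-- The generator `σ_s` of the Artin group. -/
def ArtinGroup.sigma {B : Type*} (M : CoxeterMatrix B) (s : B) : ArtinGroup M :=
  PresentedGroup.of (rels := ArtinGroup.rels M) s

namespace SEAux
open List CoxeterSystem

attribute [local instance] Classical.propDecidable

variable {B W : Type*} [Group W] {M : CoxeterMatrix B} (cs : CoxeterSystem M W)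

local prefix:100 "σ" => cs.simple
local prefix:100 "π" => cs.wordProd
local prefix:100 "ℓ" => cs.length

private lemma conj_simple_eq_iff (i : B) (t : W) : σ i * t * σ i = σ i ↔ t = σ i := by
  constructor
  · intro h
    have h2 := congrArg (fun x => σ i * x * σ i) h
    simp only [mul_assoc, cs.simple_mul_simple_cancel_left, cs.simple_mul_simple_self,
      mul_one, one_mul] at h2
    exact h2
  · rintro rfl
    rw [cs.simple_mul_simple_self, one_mul]

noncomputable def perm (i : B) : Equiv.Perm (W × ℤˣ) :=
  Function.Involutive.toPerm
    (fun p => (σ i * p.1 * σ i, if p.1 = σ i then -p.2 else p.2)) (by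
      intro ⟨t, ε⟩
      have h1 : σ i * (σ i * t * σ i) * σ i = t := by
        rw [← mul_assoc, ← mul_assoc, cs.simple_mul_simple_self, one_mul, mul_assoc,
          cs.simple_mul_simple_self, mul_one]
      by_cases h : t = σ i
      · simp [h, (conj_simple_eq_iff cs i (σ i)).mpr rfl, h1]
      · have h2 : ¬ (σ i * t * σ i = σ i) := fun hc => h ((conj_simple_eq_iff cs i t).mp hc)
        simp [h, h2, h1])

lemma perm_apply (i : B) (t : W) (ε : ℤˣ) :
    perm cs i (t, ε) = (σ i * t * σ i, if t = σ i then -ε else ε) := rfl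

noncomputable def nocc (ω : List B) (t : W) : ℕ :=
  (cs.rightInvSeq ω).countP (fun x => decide (x = t))

lemma nocc_nil (t : W) : nocc cs [] t = 0 := rfl

lemma nocc_cons (i : B) (ω : List B) (t : W) :
    nocc cs (i :: ω) t = nocc cs ω t + (if t = (π ω)⁻¹ * σ i * π ω then 1 else 0) := by
  unfold nocc
  show List.countP _ (_ :: _) = _
  rw [List.countP_cons]
  congr 1
  simp only [decide_eq_true_eq]
  rcases Classical.em (t = (π ω)⁻¹ * σ i * π ω) with h | h
  · rw [if_pos h.symm, if_pos h]
  · rw [if_neg (fun hc => h hc.symm), if_neg h]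

lemma prod_map_perm_apply (ω : List B) (t : W) (ε : ℤˣ) :
    ((ω.map (perm cs)).prod : Equiv.Perm (W × ℤˣ)) (t, ε) =
      (π ω * t * (π ω)⁻¹, ε * (-1) ^ (nocc cs ω t)) := by
  induction ω with
  | nil => simp [nocc_nil]
  | cons i ω ih =>
    rw [List.map_cons, List.prod_cons, Equiv.Perm.mul_apply, ih, perm_apply,
      cs.wordProd_cons, nocc_cons]
    have hiff : π ω * t * (π ω)⁻¹ = σ i ↔ t = (π ω)⁻¹ * σ i * π ω := by
      constructor
      · intro h; rw [← h]; group
      · intro h; rw [h]; group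
    rcases Classical.em (t = (π ω)⁻¹ * σ i * π ω) with h | h
    · rw [if_pos (hiff.mpr h), if_pos h]
      refine Prod.ext ?_ ?_
      · show σ i * (π ω * t * (π ω)⁻¹) * σ i = _
        rw [mul_inv_rev, cs.inv_simple]; group
      · show -(ε * (-1) ^ nocc cs ω t) = ε * (-1) ^ (nocc cs ω t + 1)
        rw [pow_succ, mul_neg_one, mul_neg]
    · rw [if_neg (fun hc => h (hiff.mp hc)), if_neg h]
      refine Prod.ext ?_ ?_
      · show σ i * (π ω * t * (π ω)⁻¹) * σ i = _
        rw [mul_inv_rev, cs.inv_simple]; group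
      · show ε * (-1) ^ nocc cs ω t = ε * (-1) ^ (nocc cs ω t + 0)
        rw [add_zero]

lemma prod_map_alternatingWord {N : Type*} [Monoid N] (f : B → N) (i j : B) (m : ℕ) :
    ((alternatingWord i j (2 * m)).map f).prod = (f i * f j) ^ m := by
  induction m with
  | zero => simp [alternatingWord]
  | succ m ih =>
    have h2 : 2 * (m + 1) = (2 * m + 1) + 1 := by ring
    rw [h2, alternatingWord_succ', alternatingWord_succ']
    have he1 : ¬ Even (2 * m + 1) := by simp [Nat.even_add_one, Nat.even_mul]
    have he2 : Even (2 * m) := by simp [Nat.even_mul]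
    rw [if_neg he1, if_pos he2]
    rw [List.map_cons, List.map_cons, List.prod_cons, List.prod_cons, ih, pow_succ']
    rw [← mul_assoc]

lemma drop_alternatingWord (i j : B) (k n : ℕ) :
    (alternatingWord i j n).drop k = alternatingWord i j (n - k) := by
  induction k generalizing n with
  | zero => simp
  | succ k ih =>
    cases n with
    | zero => simp [alternatingWord]
    | succ n =>
      rw [alternatingWord_succ', List.drop_succ_cons, ih]
      congr 1
      omega

lemma getElem_alternatingWord (i j : B) (n k : ℕ) (hk : k < n) :
    (alternatingWord i j n)[k]'(by rw [length_alternatingWord]; exact hk) =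
      (if Even (n - k - 1) then j else i) := by
  have h1 : (alternatingWord i j n)[k]'(by rw [length_alternatingWord]; exact hk)
      = ((alternatingWord i j n).drop k)[0]'(by
        rw [List.length_drop, length_alternatingWord]; omega) := by
    rw [List.getElem_drop]
    simp
  rw [h1]
  obtain ⟨l, hl⟩ : ∃ l, n - k = l + 1 := ⟨n - k - 1, by omega⟩
  simp_rw [drop_alternatingWord, hl, alternatingWord_succ', List.getElem_cons_zero]
  have hl' : l = n - k - 1 := by omega
  rw [hl']
  simp

lemma conj_alternatingWord (i j : B) (l : ℕ) :
    (π (alternatingWord i j l))⁻¹ * σ (if Even l then j else i) * π (alternatingWord i j l)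
      = ((σ i * σ j)⁻¹) ^ l * σ j := by
  set p : W := σ i * σ j with hp
  have hsemi : ∀ c : ℕ, σ j * p ^ c = (p⁻¹) ^ c * σ j := by
    intro c
    have h1 : SemiconjBy (σ j) p p⁻¹ := by
      show σ j * p = p⁻¹ * σ j
      rw [hp, mul_inv_rev, cs.inv_simple, cs.inv_simple, mul_assoc]
    exact h1.pow_right c
  have hji : σ j * σ i * σ j = p⁻¹ * σ j := by
    rw [hp, mul_inv_rev, cs.inv_simple, cs.inv_simple]
  rw [cs.prod_alternatingWord_eq_mul_pow]
  rcases Nat.even_or_odd l with he | ho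
  · obtain ⟨c, hc⟩ := he
    have hl2 : l / 2 = c := by omega
    rw [if_pos ⟨c, hc⟩, if_pos ⟨c, hc⟩, hl2, one_mul]
    calc (p ^ c)⁻¹ * σ j * p ^ c
        = (p⁻¹) ^ c * (σ j * p ^ c) := by rw [inv_pow, mul_assoc]
      _ = (p⁻¹) ^ c * ((p⁻¹) ^ c * σ j) := by rw [hsemi]
      _ = (p⁻¹) ^ (c + c) * σ j := by rw [pow_add]; simp only [mul_assoc]
      _ = (p⁻¹) ^ l * σ j := by rw [← hc]
  · have hne : ¬ Even l := Nat.not_even_iff_odd.mpr ho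
    obtain ⟨c, hc⟩ := ho
    have hl2 : l / 2 = c := by omega
    rw [if_neg hne, if_neg hne, hl2]
    calc (σ j * p ^ c)⁻¹ * σ i * (σ j * p ^ c)
        = (p⁻¹) ^ c * (σ j * σ i * σ j * p ^ c) := by
          rw [mul_inv_rev, inv_pow, cs.inv_simple]; simp only [mul_assoc]
      _ = (p⁻¹) ^ c * (p⁻¹ * (σ j * p ^ c)) := by rw [hji]; simp only [mul_assoc]
      _ = (p⁻¹) ^ c * (p⁻¹ * ((p⁻¹) ^ c * σ j)) := by rw [hsemi]
      _ = (p⁻¹) ^ (c + 1 + c) * σ j := by rw [pow_add, pow_add, pow_one]; simp only [mul_assoc]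
      _ = (p⁻¹) ^ l * σ j := by rw [show c + 1 + c = l by omega]

lemma getD_ris_alternatingWord (i j : B) (m k : ℕ) (hk : k < 2 * m) :
    (cs.rightInvSeq (alternatingWord i j (2 * m))).getD k 1
      = ((σ i * σ j)⁻¹) ^ (2 * m - k - 1) * σ j := by
  rw [cs.getD_rightInvSeq, drop_alternatingWord]
  have hget : (alternatingWord i j (2 * m))[k]? = some (if Even (2 * m - k - 1) then j else i) := by
    rw [List.getElem?_eq_getElem (by rw [length_alternatingWord]; exact hk)]
    rw [getElem_alternatingWord i j (2 * m) k hk]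
  rw [hget]
  show (π (alternatingWord i j (2 * m - (k + 1))))⁻¹ * σ (if Even (2 * m - k - 1) then j else i)
      * π (alternatingWord i j (2 * m - (k + 1))) = _
  have h3 : 2 * m - (k + 1) = 2 * m - k - 1 := by omega
  rw [h3, conj_alternatingWord]

lemma even_nocc_alternatingWord (i j : B) (m : ℕ) (hm : (σ i * σ j) ^ m = 1) (t : W) :
    Even (nocc cs (alternatingWord i j (2 * m)) t) := by
  set L := cs.rightInvSeq (alternatingWord i j (2 * m)) with hL
  have hlen : L.length = 2 * m := by
    rw [hL, cs.length_rightInvSeq, length_alternatingWord]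
  have hpm : ((σ i * σ j)⁻¹ : W) ^ m = 1 := by
    rw [inv_pow, hm, inv_one]
  have htd : L.take m = L.drop m := by
    apply List.ext_getElem
    · rw [List.length_take, List.length_drop, hlen]; omega
    · intro k hk1 hk2
      have hk : k < m := by rw [List.length_take, hlen] at hk1; omega
      rw [List.getElem_take, List.getElem_drop]
      have e1 : L[k]'(by omega) = L.getD k 1 := by
        rw [List.getD_eq_getElem L 1 (by omega)]
      have e2 : L[m + k]'(by omega) = L.getD (m + k) 1 := by
        rw [List.getD_eq_getElem L 1 (by omega)]
      rw [e1, e2, hL, getD_ris_alternatingWord cs i j m k (by omega),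
        getD_ris_alternatingWord cs i j m (m + k) (by omega)]
      have h4 : 2 * m - k - 1 = m + (2 * m - (m + k) - 1) := by omega
      rw [h4, pow_add, hpm, one_mul]
  have hsplit : nocc cs (alternatingWord i j (2 * m)) t
      = (L.take m).countP (fun x => decide (x = t)) + (L.drop m).countP (fun x => decide (x = t)) := by
    unfold nocc
    rw [← hL, ← List.countP_append, List.take_append_drop]
  rw [hsplit, ← htd]
  exact ⟨(L.take m).countP (fun x => decide (x = t)), by ring⟩

lemma perm_liftable : M.IsLiftable (perm cs) := by
  intro i j
  show (perm cs i * perm cs j) ^ M i j = 1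
  rw [← prod_map_alternatingWord (perm cs) i j (M i j)]
  apply Equiv.ext
  rintro ⟨t, ε⟩
  rw [prod_map_perm_apply]
  have hπ : π (alternatingWord i j (2 * M i j)) = 1 := by
    rw [cs.prod_alternatingWord_eq_mul_pow, if_pos (by simp [Nat.even_mul]), one_mul,
      Nat.mul_div_cancel_left _ (by norm_num : 0 < 2), cs.simple_mul_simple_pow]
  have heven := even_nocc_alternatingWord cs i j (M i j) (cs.simple_mul_simple_pow i j) t
  rw [hπ, heven.neg_one_pow, mul_one, one_mul, inv_one, mul_one]
  rfl
noncomputable def eta : W →* Equiv.Perm (W × ℤˣ) := cs.lift ⟨perm cs, perm_liftable cs⟩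

lemma eta_simple (i : B) : eta cs (σ i) = perm cs i :=
  cs.lift_apply_simple (perm_liftable cs) i

lemma eta_wordProd (ω : List B) : eta cs (π ω) = (ω.map (perm cs)).prod := by
  induction ω with
  | nil => rw [cs.wordProd_nil, map_one, List.map_nil, List.prod_nil]
  | cons i ω ih => rw [cs.wordProd_cons, map_mul, eta_simple, List.map_cons, List.prod_cons, ih]

noncomputable def Sgn (w t : W) : ℤˣ := ((eta cs w) (t, 1)).2

lemma sgn_eq_pow_nocc (ω : List B) (t : W) : Sgn cs (π ω) t = (-1) ^ nocc cs ω t := by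
  unfold Sgn
  rw [eta_wordProd, prod_map_perm_apply, one_mul]

lemma eta_apply (w t : W) (ε : ℤˣ) : eta cs w (t, ε) = (w * t * w⁻¹, ε * Sgn cs w t) := by
  obtain ⟨ω, rfl⟩ := cs.wordProd_surjective w
  rw [eta_wordProd, prod_map_perm_apply, ← sgn_eq_pow_nocc]

private lemma odd_of_neg_one_pow {n : ℕ} (h : ((-1 : ℤˣ)) ^ n = -1) : Odd n := by
  by_contra h'
  rw [Nat.not_odd_iff_even] at h'
  rw [h'.neg_one_pow] at h
  exact absurd h (by decide)

private lemma mem_ris_of_nocc_pos {ω : List B} {t : W} (h : 0 < nocc cs ω t) :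
    t ∈ cs.rightInvSeq ω := by
  unfold nocc at h
  obtain ⟨x, hx, he⟩ := List.countP_pos_iff.mp h
  rw [decide_eq_true_eq] at he
  rwa [← he]

lemma length_mul_lt_of_sgn_neg {w t : W} (h : Sgn cs w t = -1) : ℓ (w * t) < ℓ w := by
  obtain ⟨ω, hω, rfl⟩ := cs.exists_reduced_word' w
  rw [sgn_eq_pow_nocc] at h
  exact (cs.isRightInversion_of_mem_rightInvSeq hω
    (mem_ris_of_nocc_pos cs (odd_of_neg_one_pow h).pos)).2

lemma sgn_refl {t : W} (ht : cs.IsReflection t) : Sgn cs t t = -1 := by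
  obtain ⟨v, i, rfl⟩ := ht
  have hvt : v⁻¹ * (v * σ i * v⁻¹) * (v⁻¹)⁻¹ = σ i := by group
  have e0 : eta cs v⁻¹ ((v * σ i * v⁻¹), 1)
      = (σ i, Sgn cs v⁻¹ (v * σ i * v⁻¹)) := by
    rw [eta_apply, one_mul, hvt]
  have eid : Sgn cs v (σ i) * Sgn cs v⁻¹ (v * σ i * v⁻¹) = 1 := by
    have h1 : eta cs v⁻¹ (eta cs v (σ i, 1)) = (σ i, 1) := by
      rw [← Equiv.Perm.mul_apply, ← map_mul, inv_mul_cancel, map_one, Equiv.Perm.one_apply]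
    rw [eta_apply cs v (σ i) 1, one_mul, eta_apply] at h1
    have h2 := congrArg Prod.snd h1
    simpa using h2
  show Sgn cs (v * σ i * v⁻¹) (v * σ i * v⁻¹) = -1
  unfold Sgn
  rw [map_mul, map_mul, Equiv.Perm.mul_apply, Equiv.Perm.mul_apply, e0, eta_simple, perm_apply,
    if_pos rfl]
  rw [cs.simple_mul_simple_cancel_right]
  rw [eta_apply]
  show -Sgn cs v⁻¹ (v * σ i * v⁻¹) * Sgn cs v (σ i) = -1
  calc -Sgn cs v⁻¹ (v * σ i * v⁻¹) * Sgn cs v (σ i)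
      = -(Sgn cs v (σ i) * Sgn cs v⁻¹ (v * σ i * v⁻¹)) := by rw [neg_mul, mul_comm]
    _ = -1 := by rw [eid]

lemma strong_exchange (ω : List B) {t : W} (ht : cs.IsReflection t)
    (hl : ℓ (π ω * t) < ℓ (π ω)) : t ∈ cs.rightInvSeq ω := by
  have htt : t * t * t⁻¹ = t := by rw [ht.mul_self, one_mul, ht.inv]
  have hsgn : Sgn cs (π ω) t = -1 := by
    have hw : π ω = (π ω * t) * t := by rw [mul_assoc, ht.mul_self, mul_one]
    have hmul : Sgn cs (π ω) t = Sgn cs t t * Sgn cs (π ω * t) (t * t * t⁻¹) := by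
      conv_lhs => rw [hw]
      unfold Sgn
      rw [map_mul, Equiv.Perm.mul_apply, eta_apply cs t t 1, one_mul, eta_apply,
        eta_apply cs (π ω * t) (t * t * t⁻¹) 1, one_mul]
    rw [htt] at hmul
    have hu : Sgn cs (π ω * t) t = 1 := by
      rcases Int.units_eq_one_or (Sgn cs (π ω * t) t) with h | h
      · exact h
      · exfalso
        have h2 := length_mul_lt_of_sgn_neg cs h
        rw [mul_assoc, ht.mul_self, mul_one] at h2
        omega
    rw [hmul, hu, mul_one, sgn_refl cs ht]
  rw [sgn_eq_pow_nocc] at hsgn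
  exact mem_ris_of_nocc_pos cs (odd_of_neg_one_pow hsgn).pos

lemma exchange (ω : List B) {t : W} (ht : cs.IsReflection t)
    (hl : ℓ (π ω * t) < ℓ (π ω)) :
    ∃ j < ω.length, π ω * t = π (ω.eraseIdx j) := by
  obtain ⟨j, hj, hgt⟩ := List.mem_iff_getElem.mp (strong_exchange cs ω ht hl)
  refine ⟨j, by rw [← cs.length_rightInvSeq ω]; exact hj, ?_⟩
  have h1 : t = (cs.rightInvSeq ω).getD j 1 := by
    rw [List.getD_eq_getElem _ 1 hj, hgt]
  rw [h1, cs.wordProd_mul_getD_rightInvSeq]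

lemma exists_reduced_word_sublist :
    ∀ n (ω : List B), ω.length ≤ n →
      ∃ ω', cs.IsReduced ω' ∧ π ω' = π ω ∧ ∀ b ∈ ω', b ∈ ω := by
  intro n
  induction n with
  | zero =>
    intro ω hω
    have h0 : ω = [] := List.eq_nil_of_length_eq_zero (Nat.le_antisymm hω (Nat.zero_le _))
    subst h0
    exact ⟨[], by simp [CoxeterSystem.IsReduced], rfl, by simp⟩
  | succ n ih =>
    intro ω hω
    by_cases hred : cs.IsReduced ω
    · exact ⟨ω, hred, rfl, fun b hb => hb⟩
    have hne : ω ≠ [] := by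
      rintro rfl
      exact hred (by simp [CoxeterSystem.IsReduced])
    have hlp : 0 < ω.length := List.length_pos_iff.mpr hne
    have hex : ∃ j, ¬ cs.IsReduced (ω.take (j + 1)) := by
      refine ⟨ω.length - 1, ?_⟩
      have h1 : ω.length - 1 + 1 = ω.length :=
        Nat.succ_pred_eq_of_pos (List.length_pos_iff.mpr hne)
      rw [h1, List.take_length]
      exact hred
    set j := Nat.find hex with hjdef
    have hPj : ¬ cs.IsReduced (ω.take (j + 1)) := Nat.find_spec hex
    have hmin : ∀ k, k < j → cs.IsReduced (ω.take (k + 1)) := fun k hk =>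
      not_not.mp (Nat.find_min hex hk)
    have hj1 : 1 ≤ j := by
      by_contra h0
      push_neg at h0
      interval_cases j
      apply hPj
      have h2 : ∃ b ω₂, ω = b :: ω₂ := by
        cases ω with
        | nil => exact absurd rfl hne
        | cons b ω₂ => exact ⟨b, ω₂, rfl⟩
      obtain ⟨b, ω₂, rfl⟩ := h2
      show cs.IsReduced (List.take 1 (b :: ω₂))
      have : List.take 1 (b :: ω₂) = [b] := by simp
      rw [this]
      show ℓ (π [b]) = _
      rw [cs.wordProd_singleton, cs.length_simple, List.length_singleton]
    have hredj : cs.IsReduced (ω.take j) := by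
      obtain ⟨k, hk⟩ : ∃ k, j = k + 1 := ⟨j - 1, by omega⟩
      rw [hk]
      exact hmin k (by omega)
    have hjlen : j + 1 ≤ ω.length := by
      by_contra h
      push_neg at h
      have h2 : ω.length - 1 < j := by omega
      have h3 := hmin _ h2
      have h4 : ω.length - 1 + 1 = ω.length := by omega
      rw [h4, List.take_length] at h3
      exact hred h3
    have hjlt : j < ω.length := by omega
    have htake : ω.take (j + 1) = ω.take j ++ [ω[j]'hjlt] := by
      rw [List.take_succ, List.getElem?_eq_getElem hjlt]
      rfl
    have hlentj : (ω.take j).length = j := by rw [List.length_take]; omega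
    have hℓtj : ℓ (π (ω.take j)) = j := by
      have := hredj
      unfold CoxeterSystem.IsReduced at this
      rw [this, hlentj]
    have hstep : ℓ (π (ω.take j) * σ (ω[j]'hjlt)) < ℓ (π (ω.take j)) := by
      have hlen1 : (ω.take (j + 1)).length = j + 1 := by rw [List.length_take]; omega
      have hne1 : ℓ (π (ω.take (j + 1))) ≠ j + 1 := by
        intro hc
        exact hPj (by unfold CoxeterSystem.IsReduced; rw [hc, hlen1])
      rw [htake, cs.wordProd_append, cs.wordProd_singleton] at hne1
      rcases cs.length_mul_simple (π (ω.take j)) (ω[j]'hjlt) with h | h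
      · rw [h, hℓtj] at hne1; exact absurd rfl hne1
      · omega
    obtain ⟨k, hk, heq⟩ := exchange cs (ω.take j) (cs.isReflection_simple (ω[j]'hjlt)) hstep
    set ω' := ((ω.take j).eraseIdx k) ++ ω.drop (j + 1) with hω'
    have hπ : π ω' = π ω := by
      rw [hω', cs.wordProd_append, ← heq]
      conv_rhs => rw [← List.take_append_drop (j + 1) ω]
      rw [cs.wordProd_append, htake, cs.wordProd_append, cs.wordProd_singleton]
    have hklen : k < (ω.take j).length := by rw [hlentj]; omega
    have hlen' : ω'.length ≤ n := by
      rw [hω', List.length_append, List.length_drop]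
      have := List.length_eraseIdx_add_one hklen
      omega
    obtain ⟨ω'', h1, h2, h3⟩ := ih ω' hlen'
    refine ⟨ω'', h1, by rw [h2, hπ], ?_⟩
    intro x hx
    rcases List.mem_append.mp (h3 x hx) with h | h
    · exact ((List.eraseIdx_sublist _ k).trans (List.take_sublist j ω)).subset h
    · exact (List.drop_sublist (j + 1) ω).subset h

lemma exists_reduced_word_subset (ω : List B) :
    ∃ ω', cs.IsReduced ω' ∧ π ω' = π ω ∧ ∀ b ∈ ω', b ∈ ω :=
  exists_reduced_word_sublist cs ω.length ω le_rfl
lemma simple_mem_parabolic {X : Set B} {b : B} (hb : b ∈ X) : σ b ∈ cs.parabolic X :=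
  Subgroup.subset_closure ⟨b, hb, rfl⟩

lemma wordProd_mem_parabolic {X : Set B} {ω : List B} (hω : ∀ b ∈ ω, b ∈ X) :
    π ω ∈ cs.parabolic X := by
  induction ω with
  | nil => rw [cs.wordProd_nil]; exact one_mem _
  | cons i ω ih =>
    rw [cs.wordProd_cons]
    exact mul_mem (simple_mem_parabolic cs (hω i List.mem_cons_self))
      (ih fun b hb => hω b (List.mem_cons_of_mem _ hb))

lemma exists_reduced_word_of_mem_parabolic {X : Set B} {u : W} (hu : u ∈ cs.parabolic X) :
    ∃ ω, cs.IsReduced ω ∧ (∀ b ∈ ω, b ∈ X) ∧ π ω = u := by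
  have hword : ∃ ω, (∀ b ∈ ω, b ∈ X) ∧ π ω = u := by
    induction hu using Subgroup.closure_induction with
    | mem x hx =>
      obtain ⟨b, hb, rfl⟩ := hx
      exact ⟨[b], by simpa using hb, cs.wordProd_singleton b⟩
    | one => exact ⟨[], by simp, cs.wordProd_nil⟩
    | mul x y hx' hy' hx hy =>
      obtain ⟨ω1, h1, rfl⟩ := hx
      obtain ⟨ω2, h2, rfl⟩ := hy
      exact ⟨ω1 ++ ω2, fun b hb => (List.mem_append.mp hb).elim (h1 b) (h2 b),
        cs.wordProd_append ω1 ω2⟩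
    | inv x hx' hx =>
      obtain ⟨ω1, h1, rfl⟩ := hx
      exact ⟨ω1.reverse, fun b hb => h1 b (List.mem_reverse.mp hb), cs.wordProd_reverse ω1⟩
  obtain ⟨ω0, h0, hπ0⟩ := hword
  obtain ⟨ω, hred, hπ, hsub⟩ := exists_reduced_word_subset cs ω0
  exact ⟨ω, hred, fun b hb => h0 b (hsub b hb), by rw [hπ, hπ0]⟩

lemma length_minimal_mul {X : Set B} {v : W} (hv : cs.IsMinimalCosetRep X v)
    {u : W} (hu : u ∈ cs.parabolic X) : ℓ (v * u) = ℓ v + ℓ u := by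
  obtain ⟨ω, hred, hωX, hπω⟩ := exists_reduced_word_of_mem_parabolic cs hu
  have hlen : ℓ u = ω.length := by rw [← hπω, hred]
  suffices h : ∀ ω1 : List B, cs.IsReduced ω1 → (∀ b ∈ ω1, b ∈ X) →
      ℓ (v * π ω1) = ℓ v + ω1.length by
    rw [← hπω, h ω hred hωX, hred]
  intro ω1
  induction ω1 using List.reverseRecOn with
  | nil => intro _ _; simp
  | append_singleton ω1 b ih =>
    intro hred1 hX1
    have hredω1 : cs.IsReduced ω1 := by
      have h1 := hred1.take ω1.length
      rwa [List.take_left] at h1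
    have ihh := ih hredω1 (fun x hx => hX1 x (List.mem_append_left _ hx))
    have hbX : b ∈ X := hX1 b (List.mem_append_right _ (List.mem_singleton.mpr rfl))
    have hstep : ℓ (v * π ω1 * σ b) = ℓ (v * π ω1) + 1 := by
      rcases cs.length_mul_simple (v * π ω1) b with h | h
      · exact h
      · exfalso
        obtain ⟨ρ, hρred, hρ⟩ := cs.exists_reduced_word' v
        have hρlen : ρ.length = ℓ v := by rw [hρ, hρred]
        have hprod : π (ρ ++ ω1) = v * π ω1 := by rw [cs.wordProd_append, ← hρ]
        have hredcat : cs.IsReduced (ρ ++ ω1) := by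
          unfold CoxeterSystem.IsReduced
          rw [hprod, ihh, List.length_append, hρlen]
        have hlt : ℓ (π (ρ ++ ω1) * σ b) < ℓ (π (ρ ++ ω1)) := by
          rw [hprod]; omega
        obtain ⟨k, hk, heq⟩ := exchange cs (ρ ++ ω1) (cs.isReflection_simple b) hlt
        rw [hprod] at heq
        rcases lt_or_ge k ρ.length with hkρ | hkρ
        · rw [List.eraseIdx_append_of_lt_length hkρ, cs.wordProd_append] at heq
          have hmem : π ω1 * σ b * (π ω1)⁻¹ ∈ cs.parabolic X := by
            have h1 : π ω1 ∈ cs.parabolic X :=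
              wordProd_mem_parabolic cs (fun x hx => hX1 x (List.mem_append_left _ hx))
            exact mul_mem (mul_mem h1 (simple_mem_parabolic cs hbX)) (inv_mem h1)
          have hvm := hv _ hmem
          have hcalc : v * (π ω1 * σ b * (π ω1)⁻¹) = π (ρ.eraseIdx k) := by
            have h2 : v * (π ω1 * σ b * (π ω1)⁻¹) = v * π ω1 * σ b * (π ω1)⁻¹ := by
              simp only [mul_assoc]
            rw [h2, heq, mul_inv_cancel_right]
          have hle := cs.length_wordProd_le (ρ.eraseIdx k)
          have hler := List.length_eraseIdx_add_one hkρ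
          rw [hcalc] at hvm
          omega
        · rw [List.eraseIdx_append_of_length_le hkρ, cs.wordProd_append, ← hρ] at heq
          rw [mul_assoc] at heq
          have hcanc : π ω1 * σ b = π (ω1.eraseIdx (k - ρ.length)) :=
            mul_left_cancel heq
          have hr1 : ℓ (π ω1 * σ b) = ω1.length + 1 := by
            have h3 := hred1
            unfold CoxeterSystem.IsReduced at h3
            rw [cs.wordProd_append, cs.wordProd_singleton, List.length_append,
              List.length_singleton] at h3
            exact h3
          have hle := cs.length_wordProd_le (ω1.eraseIdx (k - ρ.length))
          have hle2 : (ω1.eraseIdx (k - ρ.length)).length ≤ ω1.length :=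
            (List.eraseIdx_sublist ω1 (k - ρ.length)).length_le
          rw [hcanc] at hr1
          omega
    rw [cs.wordProd_append, cs.wordProd_singleton, ← mul_assoc, hstep, ihh, List.length_append,
      List.length_singleton]
    omega

lemma isMinimalCosetRep_one (X : Set B) : cs.IsMinimalCosetRep X 1 := by
  intro u hu
  rw [cs.length_one]
  exact Nat.zero_le _

end SEAux

/-- given the set-section `τ : W → A_Γ` of `θ` (defined on each `w` via any
reduced expression of `w`), the relation `(α,X) ⪯ (β,Y)` iff `X ⊆ Y` and `α = β·τ(w)` for
some `(∅,X)`-minimal `w ∈ W_Y`, is a partial order on `A × 𝒮^f`. -/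
theorem stmt_11 {B W : Type*} [Group W] {M : CoxeterMatrix B}
    (cs : CoxeterSystem M W) (τ : W → ArtinGroup M)
    (hτ : ∀ (w : W) (ω : List B), cs.IsReduced ω → cs.wordProd ω = w →
      τ w = (ω.map (ArtinGroup.sigma M)).prod) :
    IsPartialOrder {p : ArtinGroup M × Set B // ((cs.parabolic p.2 : Set W)).Finite}
      (fun a b => a.1.2 ⊆ b.1.2 ∧
        ∃ w ∈ cs.parabolic b.1.2, cs.IsMinimalCosetRep a.1.2 w ∧ a.1.1 = b.1.1 * τ w) := by
  have tau_one : τ 1 = 1 := by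
    rw [hτ 1 [] (by simp [CoxeterSystem.IsReduced]) (cs.wordProd_nil)]
    simp
  have tau_mul : ∀ u v : W, cs.length (u * v) = cs.length u + cs.length v →
      τ (u * v) = τ u * τ v := by
    intro u v h
    obtain ⟨α, hα, hαv⟩ := cs.exists_reduced_word' u
    obtain ⟨β, hβ, hβv⟩ := cs.exists_reduced_word' v
    have hprod : cs.wordProd (α ++ β) = u * v := by rw [cs.wordProd_append, ← hαv, ← hβv]
    have hredcat : cs.IsReduced (α ++ β) := by
      unfold CoxeterSystem.IsReduced
      rw [hprod, h, List.length_append, hαv, hβv, hα, hβ]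
    rw [hτ (u * v) (α ++ β) hredcat hprod, hτ u α hα hαv.symm, hτ v β hβ hβv.symm,
      List.map_append, List.prod_append]
  refine { refl := ?_, trans := ?_, antisymm := ?_ }
  · intro a
    exact ⟨subset_rfl, 1, one_mem _, SEAux.isMinimalCosetRep_one cs _,
      by rw [tau_one, mul_one]⟩
  · rintro a b c ⟨hXY, w, hwY, hwmin, hαβ⟩ ⟨hYZ, v, hvZ, hvmin, hβγ⟩
    have hmono : cs.parabolic b.1.2 ≤ cs.parabolic c.1.2 :=
      Subgroup.closure_mono (Set.image_mono hYZ)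
    have hmono2 : cs.parabolic a.1.2 ≤ cs.parabolic b.1.2 :=
      Subgroup.closure_mono (Set.image_mono hXY)
    refine ⟨hXY.trans hYZ, v * w, mul_mem hvZ (hmono hwY), ?_, ?_⟩
    · intro u hu
      have huY : u ∈ cs.parabolic b.1.2 := hmono2 hu
      have e1 : cs.length (v * w) = cs.length v + cs.length w :=
        SEAux.length_minimal_mul cs hvmin hwY
      have e2 : cs.length (v * w * u) = cs.length v + cs.length (w * u) := by
        rw [mul_assoc]
        exact SEAux.length_minimal_mul cs hvmin (mul_mem hwY huY)
      have e3 := hwmin u hu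
      omega
    · have e1 : cs.length (v * w) = cs.length v + cs.length w :=
        SEAux.length_minimal_mul cs hvmin hwY
      rw [hαβ, hβγ, tau_mul v w e1, mul_assoc]
  · rintro a b ⟨hXY, w, hwY, hwmin, hαβ⟩ ⟨hYX, v, hvX, hvmin, hβα⟩
    have hXeq : a.1.2 = b.1.2 := Set.Subset.antisymm hXY hYX
    have hw1 : w = 1 := by
      have hwX : w ∈ cs.parabolic a.1.2 := by rw [hXeq]; exact hwY
      have h1 := hwmin w⁻¹ (inv_mem hwX)
      rw [mul_inv_cancel, cs.length_one] at h1
      exact cs.length_eq_zero_iff.mp (Nat.le_zero.mp h1)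
    have hab : a.1.1 = b.1.1 := by rw [hαβ, hw1, tau_one, mul_one]
    exact Subtype.ext (Prod.ext hab hXeq)
end
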